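/- arXiv:0906.3812 — 6 statements merged into one kernel-verified Lean document; each statement's English description precedes it below -/
import Mathlib

section
/- (Abstract three-energy decay lemma) For every C > 0 and J0 > 0 there exist constants c3 ∈ (0,1) and c4 > 0, depending only on (C, J0), with the following property. Let t0 < t* ≤ −1, J ≥ J0, c1 ≥ 0 and 0 ≤ c* ≤ c3. Let E1, E2, E3 : [t0,t*] → [0,∞) be continuous, set E = E1 + E2 + E3, and for τ ∈ [t0,t*] put τ₋ = max{t0, τ−2}. Assume that for every τ ∈ [t0,t*]: E1(τ) − E1(τ₋) ≤ C · ∫_{τ₋}^{τ} (1/|t|) · √(E1(t)) · ( c*·√(E(t)) + c1·|t|^{−J} ) dt; E2(τ) − E2(t0) ≤ C · ∫_{τ₋}^{τ} √(E2(t)) · ( √(E1(t)) + c*·√(E(t)) + c1·|t|^{−J} ) dt; E3(τ) − E3(τ₋) ≤ C · ∫_{τ₋}^{τ} (1/|t|) · √(E3(t)) · ( √(E2(t)) + c*·√(E(t)) + c1·|t|^{−J} ) dt. Then for all τ ∈ [t0,t*]: √(E(τ)) ≤ c4 · ( |t0|^J · √(E(t0)) + c1 ) / |τ|^J. -/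
open Set MeasureTheory intervalIntegral

private lemma tele_aux (Cc t0 tstar : ℝ) (F g : ℝ → ℝ)
    (hg : ContinuousOn g (Set.Icc t0 tstar))
    (hyp : ∀ τ ∈ Set.Icc t0 tstar,
      F τ - F (max t0 (τ - 2)) ≤ Cc * ∫ t in (max t0 (τ - 2))..τ, g t) :
    ∀ τ ∈ Set.Icc t0 tstar, F τ - F t0 ≤ Cc * ∫ t in t0..τ, g t := by
  have key : ∀ n : ℕ, ∀ τ ∈ Set.Icc t0 tstar, τ - t0 ≤ 2 * n →
      F τ - F t0 ≤ Cc * ∫ t in t0..τ, g t := by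
    intro n
    induction n with
    | zero =>
      intro τ hτ h
      have : τ = t0 := le_antisymm (by push_cast at h; linarith) hτ.1
      subst this
      simp
    | succ n ih =>
      intro τ hτ h
      set σ := max t0 (τ - 2) with hσdef
      have hσ1 : t0 ≤ σ := le_max_left _ _
      have hσ2 : σ ≤ τ := max_le hτ.1 (by linarith)
      have hσIcc : σ ∈ Set.Icc t0 tstar := ⟨hσ1, hσ2.trans hτ.2⟩
      have hn0 : (0:ℝ) ≤ 2 * n := by positivity
      have ihσ := ih σ hσIcc (by
        have : σ ≤ t0 + 2 * n := max_le (by linarith) (by push_cast at h ⊢; linarith)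
        linarith)
      have h1 := hyp τ hτ
      have i1 : IntervalIntegrable g volume t0 σ :=
        (hg.mono (by rw [Set.uIcc_of_le hσ1]; exact Set.Icc_subset_Icc le_rfl hσIcc.2)).intervalIntegrable
      have i2 : IntervalIntegrable g volume σ τ :=
        (hg.mono (by rw [Set.uIcc_of_le hσ2]; exact Set.Icc_subset_Icc hσ1 hτ.2)).intervalIntegrable
      have hsum : (∫ t in t0..σ, g t) + ∫ t in σ..τ, g t = ∫ t in t0..τ, g t :=
        intervalIntegral.integral_add_adjacent_intervals i1 i2
      have : Cc * ∫ t in t0..τ, g t = (Cc * ∫ t in t0..σ, g t) + Cc * ∫ t in σ..τ, g t := by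
        rw [← hsum]; ring
      linarith
  intro τ hτ
  obtain ⟨n, hn⟩ := exists_nat_ge ((τ - t0) / 2)
  exact key n τ hτ (by linarith)

private lemma int_pow_bound (J t0 s : ℝ) (hJ : 0 < J) (h0 : t0 ≤ s) (hs : s ≤ -1) :
    ∫ t in t0..s, (-t) ^ (-(2*J)-1) ≤ (-s) ^ (-(2*J)) / (2*J) := by
  have h1 : (1:ℝ) ≤ -s := by linarith
  have h2 : (1:ℝ) ≤ -t0 := by linarith
  have hcomp : (∫ t in t0..s, (-t) ^ (-(2*J)-1)) = ∫ x in (-s)..(-t0), x ^ (-(2*J)-1) := by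
    rw [show (∫ t in t0..s, (-t) ^ (-(2*J)-1))
        = ∫ t in t0..s, (fun x : ℝ => x ^ (-(2*J)-1)) (-t) from rfl,
      intervalIntegral.integral_comp_neg (fun x : ℝ => x ^ (-(2*J)-1))]
  rw [hcomp, integral_rpow (Or.inr ⟨by intro hcon; nlinarith,
      by rw [Set.uIcc_of_le (by linarith : -s ≤ -t0)]; intro hmem; linarith [hmem.1]⟩)]
  have he : -(2*J)-1+1 = -(2*J) := by ring
  rw [he]
  have hp : 0 ≤ (-t0) ^ (-(2*J)) := Real.rpow_nonneg (by linarith) _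
  have hq : 0 ≤ (-s) ^ (-(2*J)) := Real.rpow_nonneg (by linarith) _
  have h2J : (0:ℝ) < 2*J := by linarith
  rw [show ((-t0) ^ (-(2*J)) - (-s) ^ (-(2*J))) / (-(2*J))
      = ((-s) ^ (-(2*J)) - (-t0) ^ (-(2*J))) / (2*J) by rw [div_neg, ← neg_div]; ring_nf]
  gcongr
  linarith

private lemma sqrt_le_of_le_sq {x P w : ℝ} (hP : 0 ≤ P) (hw : 0 ≤ w)
    (h : x ≤ P^2 * (w*w)) : Real.sqrt x ≤ P * w := by
  have := Real.sqrt_le_sqrt h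
  calc Real.sqrt x ≤ Real.sqrt (P^2*(w*w)) := this
    _ = Real.sqrt ((P*w)^2) := by ring_nf
    _ = P*w := Real.sqrt_sq (by positivity)

private lemma rpow_combine {t J : ℝ} (h : 0 < -t) :
    1 / (-t) * (-t) ^ (-J) * (-t) ^ (-J) = (-t) ^ (-(2*J)-1) := by
  rw [one_div, ← Real.rpow_neg_one (-t), ← Real.rpow_add h, ← Real.rpow_add h]
  congr 1; ring

private lemma slow_bound (Cc J t0 s tstar M F0 : ℝ) (F g : ℝ → ℝ)
    (hC : 0 ≤ Cc) (hJ : 0 < J) (h0s : t0 ≤ s) (hstar : s ≤ tstar) (hs1 : tstar ≤ -1)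
    (hM : 0 ≤ M)
    (hint : IntervalIntegrable g volume t0 s)
    (htele : F s - F t0 ≤ Cc * ∫ t in t0..s, g t)
    (hpt : ∀ t ∈ Set.Icc t0 s, g t ≤ M * (-t) ^ (-(2*J)-1))
    (hF0 : F t0 ≤ F0 * (-s) ^ (-(2*J))) :
    F s ≤ F0 * (-s) ^ (-(2*J)) + Cc * (M * ((-s) ^ (-(2*J)) / (2*J))) := by
  have hint2 : IntervalIntegrable (fun t => M * (-t) ^ (-(2*J)-1)) volume t0 s := by
    apply ContinuousOn.intervalIntegrable
    refine ContinuousOn.mul continuousOn_const ?_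
    refine ContinuousOn.rpow_const (continuous_neg.continuousOn) ?_
    intro t ht
    rw [Set.uIcc_of_le h0s] at ht
    exact Or.inl (ne_of_gt (by have := ht.2; have := hstar; linarith : (0:ℝ) < -t))
  have hmono := intervalIntegral.integral_mono_on h0s hint hint2 hpt
  have hconst : (∫ t in t0..s, M * (-t) ^ (-(2*J)-1)) = M * ∫ t in t0..s, (-t) ^ (-(2*J)-1) :=
    intervalIntegral.integral_const_mul _ _
  have hib := int_pow_bound J t0 s hJ h0s (le_trans hstar hs1)
  have hfinal : Cc * ∫ t in t0..s, g t ≤ Cc * (M * ((-s) ^ (-(2*J)) / (2*J))) := by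
    refine mul_le_mul_of_nonneg_left (hmono.trans ?_) hC
    rw [hconst]
    exact mul_le_mul_of_nonneg_left hib hM
  linarith

private lemma window_bound (Cc t0 σ s Mx F0x : ℝ) (F g : ℝ → ℝ)
    (hC : 0 ≤ Cc) (hσ2 : σ ≤ s) (hlen : s - σ ≤ 2) (hMx : 0 ≤ Mx)
    (hint : IntervalIntegrable g volume σ s)
    (htele : F s - F t0 ≤ Cc * ∫ t in σ..s, g t)
    (hpt : ∀ t ∈ Set.Icc σ s, g t ≤ Mx)
    (hF0 : F t0 ≤ F0x) :
    F s ≤ F0x + Cc * (2 * Mx) := by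
  have hint2 : IntervalIntegrable (fun _ : ℝ => Mx) volume σ s := intervalIntegrable_const
  have hmono := intervalIntegral.integral_mono_on hσ2 hint hint2 hpt
  rw [intervalIntegral.integral_const, smul_eq_mul] at hmono
  have h2 : Cc * ∫ t in σ..s, g t ≤ Cc * (2 * Mx) := by
    refine mul_le_mul_of_nonneg_left (hmono.trans ?_) hC
    nlinarith
  linarith

private lemma key1_lemma (Cc J t0 tstar c c1 cstar K a D : ℝ) (E1 E2 E3 : ℝ → ℝ)
    (hC : 0 < Cc) (hJpos : 0 < J) (hts : tstar ≤ -1)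
    (hc : c ∈ Set.Icc t0 tstar)
    (hc1 : 0 ≤ c1) (hcs : 0 ≤ cstar) (hD : 0 < D) (hDc1 : c1 ≤ D)
    (hK1 : 1 ≤ K) (hCKJ : Cc ≤ K * J) (ha1 : 1 ≤ a) (hcsA : cstar * a ^ 8 ≤ 1)
    (hE2n : ∀ t ∈ Set.Icc t0 tstar, 0 ≤ E2 t) (hE3n : ∀ t ∈ Set.Icc t0 tstar, 0 ≤ E3 t)
    (hg1C : ContinuousOn (fun t => (1 / |t|) * Real.sqrt (E1 t) *
      (cstar * Real.sqrt (E1 t + E2 t + E3 t) + c1 * |t| ^ (-J))) (Set.Icc t0 tstar))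
    (tele1 : ∀ s ∈ Set.Icc t0 tstar, E1 s - E1 t0 ≤ Cc * ∫ t in t0..s,
      (1 / |t|) * Real.sqrt (E1 t) *
      (cstar * Real.sqrt (E1 t + E2 t + E3 t) + c1 * |t| ^ (-J)))
    (hGt0D : E1 t0 + E2 t0 + E3 t0 ≤ D ^ 2 * (-t0) ^ (-(2*J)))
    (hfb : ∀ u ∈ Set.Icc t0 c, Real.sqrt (E1 u + E2 u + E3 u) ≤ (a^8*D) * (-u) ^ (-J)) :
    ∀ s ∈ Set.Icc t0 c, E1 s ≤ (1 + K * a^8) * D^2 * (-s) ^ (-(2*J)) := by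
  intro s hs
  have hsub : Set.Icc t0 c ⊆ Set.Icc t0 tstar := Set.Icc_subset_Icc le_rfl hc.2
  have hsI := hsub hs
  have ht0m : t0 ∈ Set.Icc t0 tstar := ⟨le_rfl, hs.1.trans hsI.2⟩
  have h0s : (0:ℝ) < -s := by have := hsI.2; linarith
  have ha0 : (0:ℝ) ≤ a := by linarith
  have hpt : ∀ t ∈ Set.Icc t0 s, (1 / |t|) * Real.sqrt (E1 t) *
      (cstar * Real.sqrt (E1 t + E2 t + E3 t) + c1 * |t| ^ (-J))
      ≤ (2*a^8*D^2) * (-t) ^ (-(2*J)-1) := by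
    intro t ht
    have htc : t ∈ Set.Icc t0 c := ⟨ht.1, ht.2.trans hs.2⟩
    have htI := hsub htc
    have h0t : (0:ℝ) < -t := by have := htI.2; linarith
    rw [abs_of_neg (by linarith : t < 0)]
    have hw : (0:ℝ) ≤ (-t) ^ (-J) := Real.rpow_nonneg h0t.le _
    have hinv_nn : (0:ℝ) ≤ 1 / (-t) := le_of_lt (one_div_pos.mpr h0t)
    have hannD : (0:ℝ) ≤ a^8*D := mul_nonneg (pow_nonneg ha0 8) hD.le
    have hsq1 : Real.sqrt (E1 t) ≤ (a^8*D) * (-t) ^ (-J) :=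
      le_trans (Real.sqrt_le_sqrt (by nlinarith [hE2n t htI, hE3n t htI])) (hfb t htc)
    have hsum : cstar * Real.sqrt (E1 t + E2 t + E3 t) + c1 * (-t) ^ (-J)
        ≤ (2*D) * (-t) ^ (-J) := by
      have h1' : cstar * Real.sqrt (E1 t + E2 t + E3 t)
          ≤ cstar * ((a^8*D) * (-t) ^ (-J)) :=
        mul_le_mul_of_nonneg_left (hfb t htc) hcs
      have hcsD : cstar * (a^8*D) ≤ D := by nlinarith
      have h2' : cstar * ((a^8*D) * (-t) ^ (-J)) ≤ D * (-t) ^ (-J) := by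
        rw [← mul_assoc]
        exact mul_le_mul_of_nonneg_right hcsD hw
      have h3' : c1 * (-t) ^ (-J) ≤ D * (-t) ^ (-J) :=
        mul_le_mul_of_nonneg_right hDc1 hw
      linarith
    have hnn2 : 0 ≤ cstar * Real.sqrt (E1 t + E2 t + E3 t) + c1 * (-t) ^ (-J) :=
      add_nonneg (mul_nonneg hcs (Real.sqrt_nonneg _)) (mul_nonneg hc1 hw)
    calc 1 / (-t) * Real.sqrt (E1 t) *
        (cstar * Real.sqrt (E1 t + E2 t + E3 t) + c1 * (-t) ^ (-J))
        ≤ 1 / (-t) * ((a^8*D) * (-t) ^ (-J)) * ((2*D) * (-t) ^ (-J)) :=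
          mul_le_mul (mul_le_mul le_rfl hsq1 (Real.sqrt_nonneg _) hinv_nn) hsum hnn2
            (mul_nonneg hinv_nn (mul_nonneg hannD hw))
      _ = (2*a^8*D^2) * (1 / (-t) * (-t) ^ (-J) * (-t) ^ (-J)) := by ring
      _ = (2*a^8*D^2) * (-t) ^ (-(2*J)-1) := by rw [rpow_combine h0t]
  have hint : IntervalIntegrable (fun t => (1 / |t|) * Real.sqrt (E1 t) *
      (cstar * Real.sqrt (E1 t + E2 t + E3 t) + c1 * |t| ^ (-J))) volume t0 s :=
    (hg1C.mono (by rw [Set.uIcc_of_le hs.1]; exact Set.Icc_subset_Icc le_rfl hsI.2)).intervalIntegrable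
  have hF0 : E1 t0 ≤ D^2 * (-s) ^ (-(2*J)) := by
    have hm : (-t0:ℝ) ^ (-(2*J)) ≤ (-s) ^ (-(2*J)) :=
      Real.rpow_le_rpow_of_nonpos h0s (by linarith [hs.1]) (by linarith)
    nlinarith [hE2n t0 ht0m, hE3n t0 ht0m, sq_nonneg D]
  have hsb := slow_bound Cc J t0 s tstar (2*a^8*D^2) (D^2) E1 _ hC.le hJpos hs.1 hsI.2 hts
    (by positivity) hint (tele1 s hsI) hpt hF0
  have hx0 : (0:ℝ) ≤ (-s) ^ (-(2*J)) := Real.rpow_nonneg h0s.le _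
  have h2 : Cc * ((2*a^8*D^2) * ((-s) ^ (-(2*J)) / (2*J)))
      ≤ K * a^8 * D^2 * (-s) ^ (-(2*J)) := by
    rw [show Cc * ((2*a^8*D^2) * ((-s) ^ (-(2*J)) / (2*J)))
        = (Cc * (a^8 * D^2 * (-s) ^ (-(2*J)))) / J from by field_simp]
    rw [div_le_iff₀ hJpos]
    nlinarith [mul_le_mul_of_nonneg_right hCKJ
      (show (0:ℝ) ≤ a^8 * D^2 * (-s) ^ (-(2*J)) from by
        exact mul_nonneg (mul_nonneg (pow_nonneg ha0 8) (sq_nonneg D)) hx0)]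
  nlinarith [hsb, h2]

private lemma key2_lemma (Cc J t0 tstar c c1 cstar K a D : ℝ) (E1 E2 E3 : ℝ → ℝ)
    (hC : 0 < Cc) (hJpos : 0 < J) (hts : tstar ≤ -1)
    (hc : c ∈ Set.Icc t0 tstar)
    (hc1 : 0 ≤ c1) (hcs : 0 ≤ cstar) (hD : 0 < D) (hDc1 : c1 ≤ D)
    (hK1 : 1 ≤ K) (ha1 : 1 ≤ a) (hcsA : cstar * a ^ 8 ≤ 1)
    (hE1n : ∀ t ∈ Set.Icc t0 tstar, 0 ≤ E1 t) (hE3n : ∀ t ∈ Set.Icc t0 tstar, 0 ≤ E3 t)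
    (hg2C : ContinuousOn (fun t => Real.sqrt (E2 t) *
      (Real.sqrt (E1 t) + cstar * Real.sqrt (E1 t + E2 t + E3 t) + c1 * |t| ^ (-J)))
      (Set.Icc t0 tstar))
    (hyp2 : ∀ τ ∈ Set.Icc t0 tstar, E2 τ - E2 t0 ≤ Cc * ∫ t in (max t0 (τ - 2))..τ,
      Real.sqrt (E2 t) *
      (Real.sqrt (E1 t) + cstar * Real.sqrt (E1 t + E2 t + E3 t) + c1 * |t| ^ (-J)))
    (hGt0D : E1 t0 + E2 t0 + E3 t0 ≤ D ^ 2 * (-t0) ^ (-(2*J)))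
    (hfb : ∀ u ∈ Set.Icc t0 c, Real.sqrt (E1 u + E2 u + E3 u) ≤ (a^8*D) * (-u) ^ (-J))
    (hsq1 : ∀ u ∈ Set.Icc t0 c, Real.sqrt (E1 u) ≤ (2*K*a^4*D) * (-u) ^ (-J)) :
    ∀ s ∈ Set.Icc t0 c, E2 s ≤ (1 + 2*Cc*(a^8*(2*K*a^4+2))) * D^2 * (-s) ^ (-(2*J)) := by
  intro s hs
  have hsub : Set.Icc t0 c ⊆ Set.Icc t0 tstar := Set.Icc_subset_Icc le_rfl hc.2
  have hsI := hsub hs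
  have ht0m : t0 ∈ Set.Icc t0 tstar := ⟨le_rfl, hs.1.trans hsI.2⟩
  have h0s : (0:ℝ) < -s := by have := hsI.2; linarith
  have ha0 : (0:ℝ) ≤ a := by linarith
  have hx0 : (0:ℝ) ≤ (-s) ^ (-(2*J)) := Real.rpow_nonneg h0s.le _
  set σ := max t0 (s - 2) with hσdef
  have hσ1 : t0 ≤ σ := le_max_left _ _
  have hσ2 : σ ≤ s := max_le hs.1 (by linarith)
  have hKa4 : (0:ℝ) ≤ K*a^4 := mul_nonneg (by linarith) (pow_nonneg ha0 4)
  have hMx0 : (0:ℝ) ≤ (a^8*(2*K*a^4+2)*D^2) * (-s) ^ (-(2*J)) :=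
    mul_nonneg (mul_nonneg (mul_nonneg (pow_nonneg ha0 8)
      (by linarith : (0:ℝ) ≤ 2*K*a^4+2)) (sq_nonneg D)) hx0
  have hpt : ∀ t ∈ Set.Icc σ s, Real.sqrt (E2 t) *
      (Real.sqrt (E1 t) + cstar * Real.sqrt (E1 t + E2 t + E3 t) + c1 * |t| ^ (-J))
      ≤ (a^8*(2*K*a^4+2)*D^2) * (-s) ^ (-(2*J)) := by
    intro t ht
    have htc : t ∈ Set.Icc t0 c := ⟨hσ1.trans ht.1, ht.2.trans hs.2⟩
    have htI := hsub htc
    have h0t : (0:ℝ) < -t := by have := htI.2; linarith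
    rw [abs_of_neg (by linarith : t < 0)]
    have hw : (0:ℝ) ≤ (-t) ^ (-J) := Real.rpow_nonneg h0t.le _
    have hsq2 : Real.sqrt (E2 t) ≤ (a^8*D) * (-t) ^ (-J) :=
      le_trans (Real.sqrt_le_sqrt (by nlinarith [hE1n t htI, hE3n t htI])) (hfb t htc)
    have hsum : Real.sqrt (E1 t) + cstar * Real.sqrt (E1 t + E2 t + E3 t)
        + c1 * (-t) ^ (-J) ≤ ((2*K*a^4+2)*D) * (-t) ^ (-J) := by
      have h1' : cstar * Real.sqrt (E1 t + E2 t + E3 t)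
          ≤ cstar * ((a^8*D) * (-t) ^ (-J)) :=
        mul_le_mul_of_nonneg_left (hfb t htc) hcs
      have hcsD : cstar * (a^8*D) ≤ D := by nlinarith
      have h2' : cstar * ((a^8*D) * (-t) ^ (-J)) ≤ D * (-t) ^ (-J) := by
        rw [← mul_assoc]
        exact mul_le_mul_of_nonneg_right hcsD hw
      have h3' : c1 * (-t) ^ (-J) ≤ D * (-t) ^ (-J) :=
        mul_le_mul_of_nonneg_right hDc1 hw
      have h4' := hsq1 t htc
      linarith
    have hnn2 : 0 ≤ Real.sqrt (E1 t) + cstar * Real.sqrt (E1 t + E2 t + E3 t)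
        + c1 * (-t) ^ (-J) :=
      add_nonneg (add_nonneg (Real.sqrt_nonneg _)
        (mul_nonneg hcs (Real.sqrt_nonneg _))) (mul_nonneg hc1 hw)
    have hannD : (0:ℝ) ≤ (a^8*D) * (-t) ^ (-J) :=
      mul_nonneg (mul_nonneg (pow_nonneg ha0 8) hD.le) hw
    have hmm : (-t:ℝ) ^ (-(2*J)) ≤ (-s) ^ (-(2*J)) :=
      Real.rpow_le_rpow_of_nonpos h0s (by linarith [ht.2]) (by linarith)
    have hwws : (-t:ℝ) ^ (-J) * (-t) ^ (-J) = (-t) ^ (-(2*J)) := by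
      rw [← Real.rpow_add h0t]; congr 1; ring
    calc Real.sqrt (E2 t) *
        (Real.sqrt (E1 t) + cstar * Real.sqrt (E1 t + E2 t + E3 t) + c1 * (-t) ^ (-J))
        ≤ ((a^8*D) * (-t) ^ (-J)) * (((2*K*a^4+2)*D) * (-t) ^ (-J)) :=
          mul_le_mul hsq2 hsum hnn2 hannD
      _ = (a^8*(2*K*a^4+2)*D^2) * ((-t) ^ (-J) * (-t) ^ (-J)) := by ring
      _ = (a^8*(2*K*a^4+2)*D^2) * (-t) ^ (-(2*J)) := by rw [hwws]
      _ ≤ (a^8*(2*K*a^4+2)*D^2) * (-s) ^ (-(2*J)) := by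
          refine mul_le_mul_of_nonneg_left hmm ?_
          exact mul_nonneg (mul_nonneg (pow_nonneg ha0 8)
            (by linarith : (0:ℝ) ≤ 2*K*a^4+2)) (sq_nonneg D)
  have hint : IntervalIntegrable (fun t => Real.sqrt (E2 t) *
      (Real.sqrt (E1 t) + cstar * Real.sqrt (E1 t + E2 t + E3 t) + c1 * |t| ^ (-J)))
      volume σ s :=
    (hg2C.mono (by rw [Set.uIcc_of_le hσ2]; exact Set.Icc_subset_Icc hσ1 hsI.2)).intervalIntegrable
  have hF0 : E2 t0 ≤ D^2 * (-s) ^ (-(2*J)) := by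
    have hm : (-t0:ℝ) ^ (-(2*J)) ≤ (-s) ^ (-(2*J)) :=
      Real.rpow_le_rpow_of_nonpos h0s (by linarith [hs.1]) (by linarith)
    nlinarith [hE1n t0 ht0m, hE3n t0 ht0m, sq_nonneg D]
  have hlen : s - σ ≤ 2 := by
    have : s - 2 ≤ σ := le_max_right _ _
    linarith
  have hwb := window_bound Cc t0 σ s ((a^8*(2*K*a^4+2)*D^2) * (-s) ^ (-(2*J)))
    (D^2 * (-s) ^ (-(2*J))) E2 _ hC.le hσ2 hlen hMx0 hint (hyp2 s hsI) hpt hF0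
  nlinarith [hwb]

private lemma key3_lemma (Cc J t0 tstar c c1 cstar K a D : ℝ) (E1 E2 E3 : ℝ → ℝ)
    (hC : 0 < Cc) (hJpos : 0 < J) (hts : tstar ≤ -1)
    (hc : c ∈ Set.Icc t0 tstar)
    (hc1 : 0 ≤ c1) (hcs : 0 ≤ cstar) (hD : 0 < D) (hDc1 : c1 ≤ D)
    (hK1 : 1 ≤ K) (hCKJ : Cc ≤ K * J) (ha1 : 1 ≤ a) (hcsA : cstar * a ^ 8 ≤ 1)
    (hE1n : ∀ t ∈ Set.Icc t0 tstar, 0 ≤ E1 t) (hE2n : ∀ t ∈ Set.Icc t0 tstar, 0 ≤ E2 t)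
    (hg3C : ContinuousOn (fun t => (1 / |t|) * Real.sqrt (E3 t) *
      (Real.sqrt (E2 t) + cstar * Real.sqrt (E1 t + E2 t + E3 t) + c1 * |t| ^ (-J)))
      (Set.Icc t0 tstar))
    (tele3 : ∀ s ∈ Set.Icc t0 tstar, E3 s - E3 t0 ≤ Cc * ∫ t in t0..s,
      (1 / |t|) * Real.sqrt (E3 t) *
      (Real.sqrt (E2 t) + cstar * Real.sqrt (E1 t + E2 t + E3 t) + c1 * |t| ^ (-J)))
    (hGt0D : E1 t0 + E2 t0 + E3 t0 ≤ D ^ 2 * (-t0) ^ (-(2*J)))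
    (hfb : ∀ u ∈ Set.Icc t0 c, Real.sqrt (E1 u + E2 u + E3 u) ≤ (a^8*D) * (-u) ^ (-J))
    (hsq2 : ∀ u ∈ Set.Icc t0 c, Real.sqrt (E2 u) ≤ (3*K*a^6*D) * (-u) ^ (-J)) :
    ∀ s ∈ Set.Icc t0 c, E3 s ≤ (1 + K * (a^8*(3*K*a^6+2))) * D^2 * (-s) ^ (-(2*J)) := by
  intro s hs
  have hsub : Set.Icc t0 c ⊆ Set.Icc t0 tstar := Set.Icc_subset_Icc le_rfl hc.2
  have hsI := hsub hs
  have ht0m : t0 ∈ Set.Icc t0 tstar := ⟨le_rfl, hs.1.trans hsI.2⟩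
  have h0s : (0:ℝ) < -s := by have := hsI.2; linarith
  have ha0 : (0:ℝ) ≤ a := by linarith
  have hKa6 : (0:ℝ) ≤ K*a^6 := mul_nonneg (by linarith) (pow_nonneg ha0 6)
  have hQnn : (0:ℝ) ≤ 3*K*a^6+2 := by linarith
  have hMnn : (0:ℝ) ≤ a^8*(3*K*a^6+2)*D^2 :=
    mul_nonneg (mul_nonneg (pow_nonneg ha0 8) hQnn) (sq_nonneg D)
  have hpt : ∀ t ∈ Set.Icc t0 s, (1 / |t|) * Real.sqrt (E3 t) *
      (Real.sqrt (E2 t) + cstar * Real.sqrt (E1 t + E2 t + E3 t) + c1 * |t| ^ (-J))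
      ≤ (a^8*(3*K*a^6+2)*D^2) * (-t) ^ (-(2*J)-1) := by
    intro t ht
    have htc : t ∈ Set.Icc t0 c := ⟨ht.1, ht.2.trans hs.2⟩
    have htI := hsub htc
    have h0t : (0:ℝ) < -t := by have := htI.2; linarith
    rw [abs_of_neg (by linarith : t < 0)]
    have hw : (0:ℝ) ≤ (-t) ^ (-J) := Real.rpow_nonneg h0t.le _
    have hinv_nn : (0:ℝ) ≤ 1 / (-t) := le_of_lt (one_div_pos.mpr h0t)
    have hannD : (0:ℝ) ≤ a^8*D := mul_nonneg (pow_nonneg ha0 8) hD.le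
    have hsq3 : Real.sqrt (E3 t) ≤ (a^8*D) * (-t) ^ (-J) :=
      le_trans (Real.sqrt_le_sqrt (by nlinarith [hE1n t htI, hE2n t htI])) (hfb t htc)
    have hsum : Real.sqrt (E2 t) + cstar * Real.sqrt (E1 t + E2 t + E3 t)
        + c1 * (-t) ^ (-J) ≤ ((3*K*a^6+2)*D) * (-t) ^ (-J) := by
      have h1' : cstar * Real.sqrt (E1 t + E2 t + E3 t)
          ≤ cstar * ((a^8*D) * (-t) ^ (-J)) :=
        mul_le_mul_of_nonneg_left (hfb t htc) hcs
      have hcsD : cstar * (a^8*D) ≤ D := by nlinarith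
      have h2' : cstar * ((a^8*D) * (-t) ^ (-J)) ≤ D * (-t) ^ (-J) := by
        rw [← mul_assoc]
        exact mul_le_mul_of_nonneg_right hcsD hw
      have h3' : c1 * (-t) ^ (-J) ≤ D * (-t) ^ (-J) :=
        mul_le_mul_of_nonneg_right hDc1 hw
      have h4' := hsq2 t htc
      linarith
    have hnn2 : 0 ≤ Real.sqrt (E2 t) + cstar * Real.sqrt (E1 t + E2 t + E3 t)
        + c1 * (-t) ^ (-J) :=
      add_nonneg (add_nonneg (Real.sqrt_nonneg _)
        (mul_nonneg hcs (Real.sqrt_nonneg _))) (mul_nonneg hc1 hw)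
    calc 1 / (-t) * Real.sqrt (E3 t) *
        (Real.sqrt (E2 t) + cstar * Real.sqrt (E1 t + E2 t + E3 t) + c1 * (-t) ^ (-J))
        ≤ 1 / (-t) * ((a^8*D) * (-t) ^ (-J)) * (((3*K*a^6+2)*D) * (-t) ^ (-J)) :=
          mul_le_mul (mul_le_mul le_rfl hsq3 (Real.sqrt_nonneg _) hinv_nn) hsum hnn2
            (mul_nonneg hinv_nn (mul_nonneg hannD hw))
      _ = (a^8*(3*K*a^6+2)*D^2) * (1 / (-t) * (-t) ^ (-J) * (-t) ^ (-J)) := by ring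
      _ = (a^8*(3*K*a^6+2)*D^2) * (-t) ^ (-(2*J)-1) := by rw [rpow_combine h0t]
  have hint : IntervalIntegrable (fun t => (1 / |t|) * Real.sqrt (E3 t) *
      (Real.sqrt (E2 t) + cstar * Real.sqrt (E1 t + E2 t + E3 t) + c1 * |t| ^ (-J)))
      volume t0 s :=
    (hg3C.mono (by rw [Set.uIcc_of_le hs.1]; exact Set.Icc_subset_Icc le_rfl hsI.2)).intervalIntegrable
  have hF0 : E3 t0 ≤ D^2 * (-s) ^ (-(2*J)) := by
    have hm : (-t0:ℝ) ^ (-(2*J)) ≤ (-s) ^ (-(2*J)) :=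
      Real.rpow_le_rpow_of_nonpos h0s (by linarith [hs.1]) (by linarith)
    nlinarith [hE1n t0 ht0m, hE2n t0 ht0m, sq_nonneg D]
  have hsb := slow_bound Cc J t0 s tstar (a^8*(3*K*a^6+2)*D^2) (D^2) E3 _ hC.le hJpos hs.1
    hsI.2 hts hMnn hint (tele3 s hsI) hpt hF0
  have hx0 : (0:ℝ) ≤ (-s) ^ (-(2*J)) := Real.rpow_nonneg h0s.le _
  have h2 : Cc * ((a^8*(3*K*a^6+2)*D^2) * ((-s) ^ (-(2*J)) / (2*J)))
      ≤ K * (a^8*(3*K*a^6+2)) * D^2 * (-s) ^ (-(2*J)) := by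
    have h2J : (0:ℝ) < 2*J := by linarith
    rw [show Cc * ((a^8*(3*K*a^6+2)*D^2) * ((-s) ^ (-(2*J)) / (2*J)))
        = (Cc * (a^8*(3*K*a^6+2) * D^2 * (-s) ^ (-(2*J)))) / (2*J) from by
          field_simp; try ring]
    rw [div_le_iff₀ h2J]
    have hCK2J : Cc ≤ K * (2*J) := by nlinarith
    nlinarith [mul_le_mul_of_nonneg_right hCK2J
      (show (0:ℝ) ≤ a^8*(3*K*a^6+2) * D^2 * (-s) ^ (-(2*J)) from
        mul_nonneg hMnn hx0)]
  nlinarith [hsb, h2]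

set_option maxHeartbeats 1000000 in
private lemma improve_lemma (Cc J t0 tstar c c1 cstar K a D : ℝ) (E1 E2 E3 : ℝ → ℝ)
    (hC : 0 < Cc) (hJpos : 0 < J) (hts : tstar ≤ -1)
    (hc : c ∈ Set.Icc t0 tstar)
    (hc1 : 0 ≤ c1) (hcs : 0 ≤ cstar) (hD : 0 < D) (hDc1 : c1 ≤ D)
    (hK1 : 1 ≤ K) (hCK : Cc ≤ K) (hCKJ : Cc ≤ K * J) (ha1 : 1 ≤ a)
    (ha2 : 68*K^2 ≤ a^2) (hcsA : cstar * a ^ 8 ≤ 1)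
    (hE1n : ∀ t ∈ Set.Icc t0 tstar, 0 ≤ E1 t)
    (hE2n : ∀ t ∈ Set.Icc t0 tstar, 0 ≤ E2 t)
    (hE3n : ∀ t ∈ Set.Icc t0 tstar, 0 ≤ E3 t)
    (hg1C : ContinuousOn (fun t => (1 / |t|) * Real.sqrt (E1 t) *
      (cstar * Real.sqrt (E1 t + E2 t + E3 t) + c1 * |t| ^ (-J))) (Set.Icc t0 tstar))
    (hg2C : ContinuousOn (fun t => Real.sqrt (E2 t) *
      (Real.sqrt (E1 t) + cstar * Real.sqrt (E1 t + E2 t + E3 t) + c1 * |t| ^ (-J)))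
      (Set.Icc t0 tstar))
    (hg3C : ContinuousOn (fun t => (1 / |t|) * Real.sqrt (E3 t) *
      (Real.sqrt (E2 t) + cstar * Real.sqrt (E1 t + E2 t + E3 t) + c1 * |t| ^ (-J)))
      (Set.Icc t0 tstar))
    (tele1 : ∀ s ∈ Set.Icc t0 tstar, E1 s - E1 t0 ≤ Cc * ∫ t in t0..s,
      (1 / |t|) * Real.sqrt (E1 t) *
      (cstar * Real.sqrt (E1 t + E2 t + E3 t) + c1 * |t| ^ (-J)))
    (hyp2 : ∀ τ ∈ Set.Icc t0 tstar, E2 τ - E2 t0 ≤ Cc * ∫ t in (max t0 (τ - 2))..τ,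
      Real.sqrt (E2 t) *
      (Real.sqrt (E1 t) + cstar * Real.sqrt (E1 t + E2 t + E3 t) + c1 * |t| ^ (-J)))
    (tele3 : ∀ s ∈ Set.Icc t0 tstar, E3 s - E3 t0 ≤ Cc * ∫ t in t0..s,
      (1 / |t|) * Real.sqrt (E3 t) *
      (Real.sqrt (E2 t) + cstar * Real.sqrt (E1 t + E2 t + E3 t) + c1 * |t| ^ (-J)))
    (hGt0D : E1 t0 + E2 t0 + E3 t0 ≤ D ^ 2 * (-t0) ^ (-(2*J)))
    (boot : ∀ u ∈ Set.Icc t0 c, E1 u + E2 u + E3 u ≤ (a^8)^2 * D^2 * (-u) ^ (-(2*J))) :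
    ∀ u ∈ Set.Icc t0 c, E1 u + E2 u + E3 u ≤ (a^16/4) * D^2 * (-u) ^ (-(2*J)) := by
  have hsub : Set.Icc t0 c ⊆ Set.Icc t0 tstar := Set.Icc_subset_Icc le_rfl hc.2
  have ha0 : (0:ℝ) ≤ a := by linarith
  have hK0 : (0:ℝ) ≤ K := by linarith
  have hK2 : (1:ℝ) ≤ K^2 := by nlinarith
  have hKK : K ≤ K^2 := by nlinarith
  have hfb : ∀ u ∈ Set.Icc t0 c,
      Real.sqrt (E1 u + E2 u + E3 u) ≤ (a^8*D) * (-u) ^ (-J) := by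
    intro u hu
    have h0u : (0:ℝ) < -u := by have := (hsub hu).2; linarith
    refine sqrt_le_of_le_sq (mul_nonneg (pow_nonneg ha0 8) hD.le)
      (Real.rpow_nonneg h0u.le _) ?_
    have hwwu : (-u:ℝ) ^ (-J) * (-u) ^ (-J) = (-u) ^ (-(2*J)) := by
      rw [← Real.rpow_add h0u]; congr 1; ring
    rw [hwwu]
    exact le_of_le_of_eq (boot u hu) (by ring)
  have key1 := key1_lemma Cc J t0 tstar c c1 cstar K a D E1 E2 E3 hC hJpos hts hc hc1 hcs
    hD hDc1 hK1 hCKJ ha1 hcsA hE2n hE3n hg1C tele1 hGt0D hfb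
  have hsq1 : ∀ u ∈ Set.Icc t0 c, Real.sqrt (E1 u) ≤ (2*K*a^4*D) * (-u) ^ (-J) := by
    intro u hu
    have h0u : (0:ℝ) < -u := by have := (hsub hu).2; linarith
    have hKa4 : (0:ℝ) ≤ 2*K*a^4 := by positivity
    refine sqrt_le_of_le_sq (mul_nonneg hKa4 hD.le) (Real.rpow_nonneg h0u.le _) ?_
    have hwwu : (-u:ℝ) ^ (-J) * (-u) ^ (-J) = (-u) ^ (-(2*J)) := by
      rw [← Real.rpow_add h0u]; congr 1; ring
    rw [hwwu]
    have hx0 : (0:ℝ) ≤ (-u) ^ (-(2*J)) := Real.rpow_nonneg h0u.le _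
    have hxD : (0:ℝ) ≤ D^2 * (-u) ^ (-(2*J)) := mul_nonneg (sq_nonneg D) hx0
    have m4 : (1:ℝ) ≤ K^2*a^8 := by
      calc (1:ℝ) = 1*1 := by ring
        _ ≤ K^2*a^8 := mul_le_mul hK2 (one_le_pow₀ ha1) zero_le_one (by positivity)
    have m1 : K*a^8 ≤ K^2*a^8 := mul_le_mul_of_nonneg_right hKK (pow_nonneg ha0 8)
    have hc1' : (1:ℝ) + K*a^8 ≤ 4*(K^2*a^8) := by linarith
    have hmul := mul_le_mul_of_nonneg_right hc1' hxD
    nlinarith [key1 u hu, hmul]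
  have key2 := key2_lemma Cc J t0 tstar c c1 cstar K a D E1 E2 E3 hC hJpos hts hc hc1 hcs
    hD hDc1 hK1 ha1 hcsA hE1n hE3n hg2C hyp2 hGt0D hfb hsq1
  have hsq2 : ∀ u ∈ Set.Icc t0 c, Real.sqrt (E2 u) ≤ (3*K*a^6*D) * (-u) ^ (-J) := by
    intro u hu
    have h0u : (0:ℝ) < -u := by have := (hsub hu).2; linarith
    have hKa6 : (0:ℝ) ≤ 3*K*a^6 := by positivity
    refine sqrt_le_of_le_sq (mul_nonneg hKa6 hD.le) (Real.rpow_nonneg h0u.le _) ?_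
    have hwwu : (-u:ℝ) ^ (-J) * (-u) ^ (-J) = (-u) ^ (-(2*J)) := by
      rw [← Real.rpow_add h0u]; congr 1; ring
    rw [hwwu]
    have hx0 : (0:ℝ) ≤ (-u) ^ (-(2*J)) := Real.rpow_nonneg h0u.le _
    have hxD : (0:ℝ) ≤ D^2 * (-u) ^ (-(2*J)) := mul_nonneg (sq_nonneg D) hx0
    have p812 : a^8 ≤ a^12 := pow_le_pow_right₀ ha1 (by norm_num)
    have m4 : (1:ℝ) ≤ K^2*a^12 := by
      calc (1:ℝ) = 1*1 := by ring
        _ ≤ K^2*a^12 := mul_le_mul hK2 (one_le_pow₀ ha1) zero_le_one (by positivity)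
    have m2 : Cc*K*a^12 ≤ K^2*a^12 := by
      have : Cc*K ≤ K^2 := by nlinarith
      exact mul_le_mul_of_nonneg_right this (pow_nonneg ha0 12)
    have m3 : Cc*a^8 ≤ K^2*a^12 :=
      mul_le_mul (by nlinarith : Cc ≤ K^2) p812 (pow_nonneg ha0 8) (by positivity)
    have hc2' : (1:ℝ) + 2*Cc*(a^8*(2*K*a^4+2)) ≤ 9*(K^2*a^12) := by linarith
    have hmul := mul_le_mul_of_nonneg_right hc2' hxD
    nlinarith [key2 u hu, hmul]
  have key3 := key3_lemma Cc J t0 tstar c c1 cstar K a D E1 E2 E3 hC hJpos hts hc hc1 hcs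
    hD hDc1 hK1 hCKJ ha1 hcsA hE1n hE2n hg3C tele3 hGt0D hfb hsq2
  intro u hu
  have h0u : (0:ℝ) < -u := by have := (hsub hu).2; linarith
  have hx0 : (0:ℝ) ≤ (-u) ^ (-(2*J)) := Real.rpow_nonneg h0u.le _
  have hxD : (0:ℝ) ≤ D^2 * (-u) ^ (-(2*J)) := mul_nonneg (sq_nonneg D) hx0
  have p814 : a^8 ≤ a^14 := pow_le_pow_right₀ ha1 (by norm_num)
  have p1214 : a^12 ≤ a^14 := pow_le_pow_right₀ ha1 (by norm_num)
  have m1 : K*a^8 ≤ K^2*a^14 := mul_le_mul hKK p814 (pow_nonneg ha0 8) (by positivity)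
  have m2 : Cc*K*a^12 ≤ K^2*a^14 :=
    mul_le_mul (by nlinarith : Cc*K ≤ K^2) p1214 (pow_nonneg ha0 12) (by positivity)
  have m3 : Cc*a^8 ≤ K^2*a^14 :=
    mul_le_mul (by nlinarith : Cc ≤ K^2) p814 (pow_nonneg ha0 8) (by positivity)
  have m4 : (1:ℝ) ≤ K^2*a^14 := by
    calc (1:ℝ) = 1*1 := by ring
      _ ≤ K^2*a^14 := mul_le_mul hK2 (one_le_pow₀ ha1) zero_le_one (by positivity)
  have m5 : K^2*a^14 ≤ K^2*a^14 := le_rfl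
  have mfin : 17*(K^2*a^14) ≤ a^16/4 := by
    have h := mul_le_mul_of_nonneg_right ha2 (pow_nonneg ha0 14)
    have he : a^2*a^14 = a^16 := by ring
    linarith
  have hcoef : (1 + K * a^8) + (1 + 2*Cc*(a^8*(2*K*a^4+2))) + (1 + K * (a^8*(3*K*a^6+2)))
      ≤ a^16/4 := by linarith
  have hmul := mul_le_mul_of_nonneg_right hcoef hxD
  nlinarith [key1 u hu, key2 u hu, key3 u hu, hmul]

set_option maxHeartbeats 1000000 in
private lemma main_lemma (Cc J t0 tstar c1 cstar K a D : ℝ) (E1 E2 E3 : ℝ → ℝ)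
    (hC : 0 < Cc) (hJpos : 0 < J) (hts : tstar ≤ -1) (hts0 : t0 ≤ tstar)
    (hc1 : 0 ≤ c1) (hcs : 0 ≤ cstar) (hD : 0 < D) (hDc1 : c1 ≤ D)
    (hD0 : (-t0) ^ J * Real.sqrt (E1 t0 + E2 t0 + E3 t0) ≤ D)
    (hK1 : 1 ≤ K) (hCK : Cc ≤ K) (hCKJ : Cc ≤ K * J) (ha1 : 1 ≤ a)
    (ha2 : 68*K^2 ≤ a^2) (hcsA : cstar * a ^ 8 ≤ 1)
    (hE1n : ∀ t ∈ Set.Icc t0 tstar, 0 ≤ E1 t)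
    (hE2n : ∀ t ∈ Set.Icc t0 tstar, 0 ≤ E2 t)
    (hE3n : ∀ t ∈ Set.Icc t0 tstar, 0 ≤ E3 t)
    (hGC : ContinuousOn (fun t => E1 t + E2 t + E3 t) (Set.Icc t0 tstar))
    (hg1C : ContinuousOn (fun t => (1 / |t|) * Real.sqrt (E1 t) *
      (cstar * Real.sqrt (E1 t + E2 t + E3 t) + c1 * |t| ^ (-J))) (Set.Icc t0 tstar))
    (hg2C : ContinuousOn (fun t => Real.sqrt (E2 t) *
      (Real.sqrt (E1 t) + cstar * Real.sqrt (E1 t + E2 t + E3 t) + c1 * |t| ^ (-J)))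
      (Set.Icc t0 tstar))
    (hg3C : ContinuousOn (fun t => (1 / |t|) * Real.sqrt (E3 t) *
      (Real.sqrt (E2 t) + cstar * Real.sqrt (E1 t + E2 t + E3 t) + c1 * |t| ^ (-J)))
      (Set.Icc t0 tstar))
    (tele1 : ∀ s ∈ Set.Icc t0 tstar, E1 s - E1 t0 ≤ Cc * ∫ t in t0..s,
      (1 / |t|) * Real.sqrt (E1 t) *
      (cstar * Real.sqrt (E1 t + E2 t + E3 t) + c1 * |t| ^ (-J)))
    (hyp2 : ∀ τ ∈ Set.Icc t0 tstar, E2 τ - E2 t0 ≤ Cc * ∫ t in (max t0 (τ - 2))..τ,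
      Real.sqrt (E2 t) *
      (Real.sqrt (E1 t) + cstar * Real.sqrt (E1 t + E2 t + E3 t) + c1 * |t| ^ (-J)))
    (tele3 : ∀ s ∈ Set.Icc t0 tstar, E3 s - E3 t0 ≤ Cc * ∫ t in t0..s,
      (1 / |t|) * Real.sqrt (E3 t) *
      (Real.sqrt (E2 t) + cstar * Real.sqrt (E1 t + E2 t + E3 t) + c1 * |t| ^ (-J))) :
    ∀ τ ∈ Set.Icc t0 tstar,
      Real.sqrt (E1 τ + E2 τ + E3 τ) ≤ a ^ 8 * D * (-τ) ^ (-J) := by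
  have ht0m : t0 ∈ Set.Icc t0 tstar := ⟨le_rfl, hts0⟩
  have hneg : ∀ t ∈ Set.Icc t0 tstar, (0:ℝ) < -t := by
    intro t ht; have := ht.2; linarith
  have ha0 : (0:ℝ) ≤ a := by linarith
  have hA1 : (1:ℝ) ≤ a^8 := one_le_pow₀ ha1
  have hGnn : ∀ t ∈ Set.Icc t0 tstar, 0 ≤ E1 t + E2 t + E3 t := by
    intro t ht
    have := hE1n t ht; have := hE2n t ht; have := hE3n t ht; linarith
  have hxpos : ∀ t ∈ Set.Icc t0 tstar, (0:ℝ) < (-t) ^ (-(2*J)) := by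
    intro t ht; exact Real.rpow_pos_of_pos (hneg t ht) _
  -- initial bound
  have hGt0D : E1 t0 + E2 t0 + E3 t0 ≤ D ^ 2 * (-t0) ^ (-(2*J)) := by
    have hLnn : 0 ≤ (-t0) ^ J * Real.sqrt (E1 t0 + E2 t0 + E3 t0) :=
      mul_nonneg (Real.rpow_nonneg (le_of_lt (hneg t0 ht0m)) _) (Real.sqrt_nonneg _)
    have hsq := mul_le_mul hD0 hD0 hLnn hD.le
    have hexp : ((-t0):ℝ) ^ J * (-t0) ^ J = (-t0) ^ (2*J) := by
      rw [← Real.rpow_add (hneg t0 ht0m)]; congr 1; ring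
    have hss : Real.sqrt (E1 t0 + E2 t0 + E3 t0) * Real.sqrt (E1 t0 + E2 t0 + E3 t0)
        = E1 t0 + E2 t0 + E3 t0 := Real.mul_self_sqrt (hGnn t0 ht0m)
    have hL : ((-t0) ^ J * Real.sqrt (E1 t0 + E2 t0 + E3 t0)) *
        ((-t0) ^ J * Real.sqrt (E1 t0 + E2 t0 + E3 t0))
        = (-t0) ^ (2*J) * (E1 t0 + E2 t0 + E3 t0) := by
      calc ((-t0) ^ J * Real.sqrt (E1 t0 + E2 t0 + E3 t0)) *
          ((-t0) ^ J * Real.sqrt (E1 t0 + E2 t0 + E3 t0))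
          = ((-t0) ^ J * (-t0) ^ J) * (Real.sqrt (E1 t0 + E2 t0 + E3 t0) *
            Real.sqrt (E1 t0 + E2 t0 + E3 t0)) := by ring
        _ = (-t0) ^ (2*J) * (E1 t0 + E2 t0 + E3 t0) := by rw [hexp, hss]
    have hXpos : (0:ℝ) < (-t0) ^ (2*J) := Real.rpow_pos_of_pos (hneg t0 ht0m) _
    rw [Real.rpow_neg (le_of_lt (hneg t0 ht0m)), ← div_eq_mul_inv, le_div_iff₀ hXpos]
    nlinarith
  -- the bootstrap set
  set Sset : Set ℝ := {τ | τ ∈ Set.Icc t0 tstar ∧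
    ∀ u ∈ Set.Icc t0 τ, E1 u + E2 u + E3 u ≤ (a^8)^2 * D^2 * (-u) ^ (-(2*J))} with hSdef
  have hboot0 : E1 t0 + E2 t0 + E3 t0 ≤ (a^8)^2 * D^2 * (-t0) ^ (-(2*J)) := by
    nlinarith [le_of_lt (hxpos t0 ht0m), sq_nonneg D, hGt0D,
      mul_le_mul_of_nonneg_right (show (1:ℝ) ≤ (a^8)^2 by nlinarith)
        (mul_nonneg (sq_nonneg D) (le_of_lt (hxpos t0 ht0m)))]
  have ht0S : t0 ∈ Sset := ⟨ht0m, fun u hu => by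
    have : u = t0 := le_antisymm hu.2 hu.1
    subst this; exact hboot0⟩
  have hSne : Sset.Nonempty := ⟨t0, ht0S⟩
  have hbdd : BddAbove Sset := ⟨tstar, fun x hx => hx.1.2⟩
  obtain ⟨c, hcdef⟩ : ∃ c, c = sSup Sset := ⟨_, rfl⟩
  have hct0 : t0 ≤ c := by rw [hcdef]; exact le_csSup hbdd ht0S
  have hcts : c ≤ tstar := by rw [hcdef]; exact csSup_le hSne (fun x hx => hx.1.2)
  have hcIcc : c ∈ Set.Icc t0 tstar := ⟨hct0, hcts⟩
  have hψC : ContinuousOn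
      (fun u => E1 u + E2 u + E3 u - (a^8)^2 * D^2 * (-u) ^ (-(2*J)))
      (Set.Icc t0 tstar) :=
    hGC.sub (continuousOn_const.mul ((continuous_neg.continuousOn).rpow_const
      (fun t ht => Or.inl (ne_of_gt (hneg t ht)))))
  have hcS : c ∈ Sset := by
    refine ⟨hcIcc, fun u hu => ?_⟩
    rcases lt_or_eq_of_le hu.2 with hlt | heq
    · obtain ⟨τ', hτ'S, hτ'⟩ := exists_lt_of_lt_csSup hSne (show u < sSup Sset by
        rw [← hcdef]; exact hlt)
      exact hτ'S.2 u ⟨hu.1, le_of_lt hτ'⟩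
    · by_contra hcon
      push_neg at hcon
      have huIcc : u ∈ Set.Icc t0 tstar := ⟨hu.1, heq ▸ hcts⟩
      have hψpos : 0 < E1 u + E2 u + E3 u - (a^8)^2 * D^2 * (-u) ^ (-(2*J)) := by linarith
      have hev : {x | 0 < E1 x + E2 x + E3 x - (a^8)^2 * D^2 * (-x) ^ (-(2*J))}
          ∈ nhdsWithin u (Set.Icc t0 tstar) :=
        (hψC u huIcc).eventually (eventually_gt_nhds hψpos)
      rw [Metric.mem_nhdsWithin_iff] at hev
      obtain ⟨ε, hε, hball⟩ := hev
      obtain ⟨τ', hτ'S, hτ'⟩ := exists_lt_of_lt_csSup hSne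
        (show u - ε < sSup Sset by rw [← hcdef, ← heq]; linarith)
      have hτ'le : τ' ≤ u := by
        rw [heq, hcdef]; exact le_csSup hbdd hτ'S
      have hτ'ball : τ' ∈ Metric.ball u ε := by
        rw [Metric.mem_ball, Real.dist_eq, abs_of_nonpos (by linarith)]
        linarith
      have hτ'ψ := hball ⟨hτ'ball, hτ'S.1⟩
      have hτ'bound := hτ'S.2 τ' ⟨hτ'S.1.1, le_rfl⟩
      simp only [Set.mem_setOf_eq] at hτ'ψ
      linarith
  have hceq : c = tstar := by
    by_contra hne
    have hclt : c < tstar := lt_of_le_of_ne hcts hne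
    have himp := improve_lemma Cc J t0 tstar c c1 cstar K a D E1 E2 E3 hC hJpos hts hcIcc
      hc1 hcs hD hDc1 hK1 hCK hCKJ ha1 ha2 hcsA hE1n hE2n hE3n hg1C hg2C hg3C
      tele1 hyp2 tele3 hGt0D hcS.2
    have hψc : E1 c + E2 c + E3 c - (a^8)^2 * D^2 * (-c) ^ (-(2*J)) < 0 := by
      have h1 := himp c ⟨hct0, le_rfl⟩
      have hx0 : (0:ℝ) < (-c) ^ (-(2*J)) := hxpos c hcIcc
      have hq : (0:ℝ) < D^2 * (-c) ^ (-(2*J)) := mul_pos (pow_pos hD 2) hx0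
      have ha16 : (1:ℝ) ≤ a^16 := one_le_pow₀ ha1
      nlinarith [mul_le_mul_of_nonneg_right (show a^16/4 ≤ a^16 - a^16/2 by linarith)
        hq.le, mul_le_mul_of_nonneg_right ha16 hq.le]
    have hev : {x | E1 x + E2 x + E3 x - (a^8)^2 * D^2 * (-x) ^ (-(2*J)) < 0}
        ∈ nhdsWithin c (Set.Icc t0 tstar) :=
      (hψC c hcIcc).eventually (eventually_lt_nhds hψc)
    rw [Metric.mem_nhdsWithin_iff] at hev
    obtain ⟨ε, hε, hball⟩ := hev
    set c' := min (c + ε/2) tstar with hc'def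
    have hcc' : c < c' := lt_min (by linarith) hclt
    have hc'Icc : c' ∈ Set.Icc t0 tstar := ⟨hct0.trans hcc'.le, min_le_right _ _⟩
    have hc'S : c' ∈ Sset := by
      refine ⟨hc'Icc, fun u hu => ?_⟩
      rcases le_or_gt u c with hle | hgt
      · exact hcS.2 u ⟨hu.1, hle⟩
      · have huI : u ∈ Set.Icc t0 tstar := ⟨hu.1, hu.2.trans hc'Icc.2⟩
        have huball : u ∈ Metric.ball c ε := by
          rw [Metric.mem_ball, Real.dist_eq, abs_of_nonneg (by linarith)]
          have : u ≤ c + ε/2 := hu.2.trans (min_le_left _ _)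
          linarith
        have := hball ⟨huball, huI⟩
        simp only [Set.mem_setOf_eq] at this
        linarith
    have := le_csSup hbdd hc'S
    rw [← hcdef] at this
    linarith
  intro τ hτ
  have h0τ := hneg τ hτ
  refine sqrt_le_of_le_sq (by positivity) (Real.rpow_nonneg h0τ.le _) ?_
  have hwwτ : (-τ:ℝ) ^ (-J) * (-τ) ^ (-J) = (-τ) ^ (-(2*J)) := by
    rw [← Real.rpow_add h0τ]; congr 1; ring
  rw [hwwτ]
  have := hcS.2 τ ⟨hτ.1, by rw [hceq]; exact hτ.2⟩
  nlinarith

set_option maxHeartbeats 1000000 in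
/-- **Abstract three-energy decay lemma.** -/
theorem abstract_three_energy_decay (C J0 : ℝ) (hC : 0 < C) (hJ0 : 0 < J0) :
    ∃ c3 c4 : ℝ, c3 ∈ Set.Ioo (0 : ℝ) 1 ∧ 0 < c4 ∧
      ∀ (t0 tstar J c1 cstar : ℝ) (E1 E2 E3 : ℝ → ℝ),
        t0 < tstar → tstar ≤ -1 → J0 ≤ J → 0 ≤ c1 → 0 ≤ cstar → cstar ≤ c3 →
        ContinuousOn E1 (Set.Icc t0 tstar) →
        ContinuousOn E2 (Set.Icc t0 tstar) →
        ContinuousOn E3 (Set.Icc t0 tstar) →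
        (∀ t ∈ Set.Icc t0 tstar, 0 ≤ E1 t) →
        (∀ t ∈ Set.Icc t0 tstar, 0 ≤ E2 t) →
        (∀ t ∈ Set.Icc t0 tstar, 0 ≤ E3 t) →
        (∀ τ ∈ Set.Icc t0 tstar,
          E1 τ - E1 (max t0 (τ - 2)) ≤
            C * ∫ t in (max t0 (τ - 2))..τ, (1 / |t|) * Real.sqrt (E1 t) *
              (cstar * Real.sqrt (E1 t + E2 t + E3 t) + c1 * |t| ^ (-J))) →
        (∀ τ ∈ Set.Icc t0 tstar,
          E2 τ - E2 t0 ≤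
            C * ∫ t in (max t0 (τ - 2))..τ, Real.sqrt (E2 t) *
              (Real.sqrt (E1 t) + cstar * Real.sqrt (E1 t + E2 t + E3 t) + c1 * |t| ^ (-J))) →
        (∀ τ ∈ Set.Icc t0 tstar,
          E3 τ - E3 (max t0 (τ - 2)) ≤
            C * ∫ t in (max t0 (τ - 2))..τ, (1 / |t|) * Real.sqrt (E3 t) *
              (Real.sqrt (E2 t) + cstar * Real.sqrt (E1 t + E2 t + E3 t) + c1 * |t| ^ (-J))) →
        ∀ τ ∈ Set.Icc t0 tstar,
          Real.sqrt (E1 τ + E2 τ + E3 τ) ≤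
            c4 * (|t0| ^ J * Real.sqrt (E1 t0 + E2 t0 + E3 t0) + c1) / |τ| ^ J := by
  have hJ0' : 0 ≤ C / J0 := by positivity
  obtain ⟨K, hK1, hCK, hCKJ0⟩ : ∃ K : ℝ, 1 ≤ K ∧ C ≤ K ∧ C ≤ K * J0 := by
    refine ⟨1 + C + C / J0, by linarith, by linarith, ?_⟩
    have : (C / J0) * J0 = C := by field_simp
    nlinarith
  obtain ⟨a, ha1, ha2⟩ : ∃ a : ℝ, 1 ≤ a ∧ 68 * K ^ 2 ≤ a ^ 2 := by
    have hK2 : (1:ℝ) ≤ K ^ 2 := by nlinarith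
    exact ⟨68 * K ^ 2, by nlinarith, by nlinarith⟩
  have hA1 : (1:ℝ) ≤ a ^ 8 := one_le_pow₀ ha1
  have hApos : (0:ℝ) < a ^ 8 := by linarith
  refine ⟨min (1/2) (1/a^8), a^8, ⟨⟨lt_min (by norm_num) (by positivity),
    lt_of_le_of_lt (min_le_left _ _) (by norm_num)⟩, by positivity, ?_⟩⟩
  intro t0 tstar J c1 cstar E1 E2 E3 htt hts hJ hc1 hcs hcs3 hE1c hE2c hE3c hE1n hE2n hE3n
    hyp1 hyp2 hyp3
  have hcsA : cstar * a ^ 8 ≤ 1 := by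
    have h1 : cstar ≤ 1 / a ^ 8 := hcs3.trans (min_le_right _ _)
    rw [le_div_iff₀ hApos] at h1
    linarith
  have hJpos : 0 < J := lt_of_lt_of_le hJ0 hJ
  have hCKJ : C ≤ K * J := by nlinarith
  have hts0 : t0 ≤ tstar := le_of_lt htt
  have ht0m : t0 ∈ Set.Icc t0 tstar := Set.left_mem_Icc.mpr hts0
  have hneg : ∀ t ∈ Set.Icc t0 tstar, (0:ℝ) < -t := by
    intro t ht; have := ht.2; linarith
  have habs : ∀ t ∈ Set.Icc t0 tstar, |t| = -t := by
    intro t ht; exact abs_of_neg (by have := hneg t ht; linarith)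
  have habsne : ∀ t ∈ Set.Icc t0 tstar, |t| ≠ 0 := by
    intro t ht; rw [habs t ht]; exact ne_of_gt (hneg t ht)
  -- continuity of the integrands
  have habsC : ContinuousOn (fun t : ℝ => |t|) (Set.Icc t0 tstar) := continuous_abs.continuousOn
  have hinvC : ContinuousOn (fun t : ℝ => 1 / |t|) (Set.Icc t0 tstar) :=
    continuousOn_const.div habsC habsne
  have hpowC : ContinuousOn (fun t : ℝ => |t| ^ (-J)) (Set.Icc t0 tstar) :=
    habsC.rpow_const (fun t ht => Or.inl (habsne t ht))
  have hs1C : ContinuousOn (fun t => Real.sqrt (E1 t)) (Set.Icc t0 tstar) :=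
    Real.continuous_sqrt.comp_continuousOn hE1c
  have hs2C : ContinuousOn (fun t => Real.sqrt (E2 t)) (Set.Icc t0 tstar) :=
    Real.continuous_sqrt.comp_continuousOn hE2c
  have hs3C : ContinuousOn (fun t => Real.sqrt (E3 t)) (Set.Icc t0 tstar) :=
    Real.continuous_sqrt.comp_continuousOn hE3c
  have hGC : ContinuousOn (fun t => E1 t + E2 t + E3 t) (Set.Icc t0 tstar) :=
    (hE1c.add hE2c).add hE3c
  have hsGC : ContinuousOn (fun t => Real.sqrt (E1 t + E2 t + E3 t)) (Set.Icc t0 tstar) :=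
    Real.continuous_sqrt.comp_continuousOn hGC
  have hg1C : ContinuousOn (fun t => (1 / |t|) * Real.sqrt (E1 t) *
      (cstar * Real.sqrt (E1 t + E2 t + E3 t) + c1 * |t| ^ (-J))) (Set.Icc t0 tstar) :=
    (hinvC.mul hs1C).mul ((continuousOn_const.mul hsGC).add (continuousOn_const.mul hpowC))
  have hg2C : ContinuousOn (fun t => Real.sqrt (E2 t) *
      (Real.sqrt (E1 t) + cstar * Real.sqrt (E1 t + E2 t + E3 t) + c1 * |t| ^ (-J)))
      (Set.Icc t0 tstar) :=
    hs2C.mul ((hs1C.add (continuousOn_const.mul hsGC)).add (continuousOn_const.mul hpowC))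
  have hg3C : ContinuousOn (fun t => (1 / |t|) * Real.sqrt (E3 t) *
      (Real.sqrt (E2 t) + cstar * Real.sqrt (E1 t + E2 t + E3 t) + c1 * |t| ^ (-J)))
      (Set.Icc t0 tstar) :=
    (hinvC.mul hs3C).mul ((hs2C.add (continuousOn_const.mul hsGC)).add
      (continuousOn_const.mul hpowC))
  have tele1 := tele_aux C t0 tstar E1 _ hg1C hyp1
  have tele3 := tele_aux C t0 tstar E3 _ hg3C hyp3
  -- conclusion
  intro τ hτ
  have hτneg := hneg τ hτ
  rw [habs τ hτ, habs t0 ht0m]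
  have hτJpos : (0:ℝ) < (-τ) ^ J := Real.rpow_pos_of_pos hτneg _
  rw [le_div_iff₀ hτJpos]
  refine le_of_forall_pos_le_add ?_
  intro ε hε
  have hnn0 : 0 ≤ (-t0) ^ J * Real.sqrt (E1 t0 + E2 t0 + E3 t0) :=
    mul_nonneg (Real.rpow_nonneg (le_of_lt (hneg t0 ht0m)) _) (Real.sqrt_nonneg _)
  have hAeps : (0:ℝ) < ε / a ^ 8 := by positivity
  have hD : (0:ℝ) < (-t0) ^ J * Real.sqrt (E1 t0 + E2 t0 + E3 t0) + c1 + ε / a ^ 8 := by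
    linarith
  have hb := main_lemma C J t0 tstar c1 cstar K a
    ((-t0) ^ J * Real.sqrt (E1 t0 + E2 t0 + E3 t0) + c1 + ε / a ^ 8) E1 E2 E3
    hC hJpos hts hts0 hc1 hcs hD (by linarith) (by linarith) hK1 hCK hCKJ ha1 ha2 hcsA
    hE1n hE2n hE3n hGC hg1C hg2C hg3C tele1 hyp2 tele3 τ hτ
  have hmul := mul_le_mul_of_nonneg_right hb (le_of_lt hτJpos)
  have hco : (-τ:ℝ) ^ (-J) * (-τ) ^ J = 1 := by
    rw [← Real.rpow_add hτneg, neg_add_cancel, Real.rpow_zero]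
  have hrhs : a ^ 8 * ((-t0) ^ J * Real.sqrt (E1 t0 + E2 t0 + E3 t0) + c1 + ε / a ^ 8)
      * (-τ) ^ (-J) * (-τ) ^ J
      = a ^ 8 * ((-t0) ^ J * Real.sqrt (E1 t0 + E2 t0 + E3 t0) + c1) + ε := by
    rw [mul_assoc, hco, mul_one]
    field_simp
  rw [hrhs] at hmul
  exact hmul
end

section
/- (Difference of solutions solves a linear homogeneous symmetric hyperbolic system) Let 𝒰 ⊂ ℝ⁴ be open, P ∈ ℕ, 0 < r ≤ ∞, and 𝒜 = 𝒰 × B_r(0) ⊂ ℝ⁴ × ℝ^P. For μ = 0,1,2,3, let M^μ(q,Θ) be symmetric real P×P matrices and h(q,Θ) ∈ ℝ^P, defined for (q,Θ) ∈ 𝒜, both C¹ on 𝒜 and extending together with their first-order derivatives continuously to the closure of 𝒜, with M⁰ positive definite on the closure of 𝒜. Let Θ1, Θ2 : 𝒰 → B_r(0) be C¹ solutions of Σ_{μ=0}^{3} M^μ(q,Θ) ∂Θ/∂q^μ = h(q,Θ), both extending with their first-order derivatives continuously to the closure of 𝒰. Set Θ_s = (1−s)·Θ1 + s·Θ2 for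 s ∈ [0,1] and define the P×P matrix H(q) for q ∈ 𝒰 by H_{ij}(q) = − Σ_{μ=0}^{3} Σ_{k=1}^{P} ( ∫₀¹ (∂(M^μ)_{ik}/∂Θ^j)(q, Θ_s(q)) ds ) · (∂Θ2^k/∂q^μ)(q) + ∫₀¹ (∂h_i/∂Θ^j)(q, Θ_s(q)) ds. Then H is continuous on 𝒰 and extends continuously to the closure of 𝒰, and the difference Υ = Θ2 − Θ1 satisfies the linear homogeneous system Σ_{μ=0}^{3} M^μ(q, Θ1(q)) ∂Υ/∂q^μ = H(q)·Υ on 𝒰. -/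
open Set
open scoped ENNReal

noncomputable section

/-- Spatial part `ℝ³` with the Euclidean norm. -/
abbrev Sp3 := EuclideanSpace ℝ (Fin 3)

/-- A point `q = (q⁰, (q¹,q²,q³))` of `ℝ⁴`, split into time and space. -/
abbrev Pt4 := ℝ × Sp3

/-- The unit coordinate direction `∂/∂q^μ` in `ℝ⁴` (with `μ = 0` the time direction). -/
def dir4 (μ : Fin 4) : Pt4 :=
  if h : (μ : ℕ) = 0 then ((1 : ℝ), 0)
  else ((0 : ℝ), EuclideanSpace.single (⟨(μ : ℕ) - 1, by have := μ.isLt; omega⟩ : Fin 3) 1)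

/-- The partial derivative `∂f/∂q^μ`. -/
def pdQ (μ : Fin 4) (f : Pt4 → ℝ) : Pt4 → ℝ := fun p => fderiv ℝ f p (dir4 μ)

/-- The open ball `B_r(0) ⊂ ℝ^P` (all of `ℝ^P` if `r = ∞`), in the Euclidean norm. -/
def BallP (P : ℕ) (r : ℝ≥0∞) : Set (EuclideanSpace ℝ (Fin P)) :=
  {v | (‖v‖₊ : ℝ≥0∞) < r}

/-- `f` is `C¹` on `S` and extends, together with its first-order derivatives,
continuously to the closure of `S`. -/
def C1Ext {E F : Type*} [NormedAddCommGroup E] [NormedSpace ℝ E]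
    [NormedAddCommGroup F] [NormedSpace ℝ F] (f : E → F) (S : Set E) : Prop :=
  ContDiffOn ℝ 1 f S ∧ ContinuousOn f (closure S) ∧ ContinuousOn (fderiv ℝ f) (closure S)

/-! ### Auxiliary lemmas -/

lemma ballP_eq (P : ℕ) (r : ℝ≥0∞) :
    BallP P r = if r = ⊤ then univ else Metric.ball 0 r.toReal := by
  unfold BallP
  ext v
  by_cases hr : r = ⊤
  · simp [hr, ENNReal.coe_lt_top]
  · simp only [hr, if_false, mem_setOf_eq, Metric.mem_ball, dist_zero_right]
    rw [← ENNReal.coe_toNNReal hr, ENNReal.coe_lt_coe, ← NNReal.coe_lt_coe]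
    simp [ENNReal.coe_toNNReal hr, coe_nnnorm, ENNReal.toReal]

lemma ballP_isOpen (P : ℕ) (r : ℝ≥0∞) : IsOpen (BallP P r) := by
  rw [ballP_eq]; split <;> [exact isOpen_univ; exact Metric.isOpen_ball]

lemma ballP_convex (P : ℕ) (r : ℝ≥0∞) : Convex ℝ (BallP P r) := by
  rw [ballP_eq]; split <;> [exact convex_univ; exact convex_ball 0 _]

/-- Continuity on a set of a parametric interval integral. -/
lemma continuousOn_param_integral {X : Type*} [TopologicalSpace X]
    {F : X → ℝ → ℝ} {s : Set X}
    (hF : ContinuousOn (Function.uncurry F) (s ×ˢ Icc (0:ℝ) 1)) :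
    ContinuousOn (fun x => ∫ t in (0:ℝ)..1, F x t) s := by
  rw [continuousOn_iff_continuous_restrict]
  have hmem : ∀ t : ℝ, max 0 (min 1 t) ∈ Icc (0:ℝ) 1 := by
    intro t; exact ⟨le_max_left _ _, max_le zero_le_one (min_le_left _ _)⟩
  set F' : s → ℝ → ℝ := fun x t => F x.1 (max 0 (min 1 t)) with hF'
  have hcF' : Continuous (Function.uncurry F') := by
    rw [continuousOn_iff_continuous_restrict] at hF
    have : Function.uncurry F' =
        (restrict (s ×ˢ Icc (0:ℝ) 1) (Function.uncurry F)) ∘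
          (fun p : s × ℝ => (⟨(p.1.1, max 0 (min 1 p.2)), ⟨p.1.2, hmem p.2⟩⟩ :
            (s ×ˢ Icc (0:ℝ) 1 : Set (X × ℝ)))) := rfl
    rw [this]
    exact hF.comp (Continuous.subtype_mk (by fun_prop) _)
  have heq : ∀ x : s, ∫ t in (0:ℝ)..1, F' x t = ∫ t in (0:ℝ)..1, F x.1 t := by
    intro x
    apply intervalIntegral.integral_congr
    intro t ht
    rw [uIcc_of_le zero_le_one] at ht
    simp [hF', min_eq_right ht.2, max_eq_right ht.1]
  have := intervalIntegral.continuous_parametric_intervalIntegral_of_continuous'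
      (μ := MeasureTheory.volume) hcF' 0 1
  exact this.congr heq

/-- Partial derivative in the second variable equals the full derivative applied
to `(0, w)`. -/
lemma partial_fderiv {E F : Type*} [NormedAddCommGroup E] [NormedSpace ℝ E]
    [NormedAddCommGroup F] [NormedSpace ℝ F]
    (f : F × E → ℝ) (q : F) (Θ : E) (hf : DifferentiableAt ℝ f (q, Θ)) (w : E) :
    fderiv ℝ (fun Θv => f (q, Θv)) Θ w = fderiv ℝ f (q, Θ) ((0 : F), w) := by
  have h1 : HasFDerivAt (fun Θv : E => f (q, Θv))
      ((fderiv ℝ f (q, Θ)).comp (ContinuousLinearMap.inr ℝ F E)) Θ :=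
    hf.hasFDerivAt.comp Θ (hasFDerivAt_prodMk_right q Θ)
  rw [h1.fderiv]
  simp

/-- Fundamental theorem of calculus along the segment from `a` to `b` in the second
variable. -/
lemma ftc_seg {F : Type*} [NormedAddCommGroup F] [NormedSpace ℝ F] {P : ℕ}
    (f : F × EuclideanSpace ℝ (Fin P) → ℝ) (S : Set (F × EuclideanSpace ℝ (Fin P)))
    (hSopen : IsOpen S) (hf : ContDiffOn ℝ 1 f S)
    (hfc : ContinuousOn (fderiv ℝ f) S)
    (q : F) (a b : EuclideanSpace ℝ (Fin P))
    (hseg : ∀ s ∈ Icc (0:ℝ) 1, ((q, (1-s)•a + s•b) : F × EuclideanSpace ℝ (Fin P)) ∈ S) :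
    f (q, b) - f (q, a) = ∑ j, (∫ s in (0:ℝ)..1,
        fderiv ℝ f (q, (1-s)•a+s•b) ((0:F), EuclideanSpace.single j 1)) * (b j - a j) := by
  set γ : ℝ → F × EuclideanSpace ℝ (Fin P) := fun s => (q, (1-s)•a + s•b) with hγdef
  have hγ : ∀ s : ℝ, HasDerivAt γ ((0:F), b - a) s := by
    intro s
    have h1 : HasDerivAt (fun s : ℝ => (1-s)•a + s•b) (b - a) s := by
      have ha : HasDerivAt (fun s : ℝ => (1-s)•a) ((-1 : ℝ)•a) s :=
        (((hasDerivAt_id s).const_sub 1)).smul_const a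
      have hb : HasDerivAt (fun s : ℝ => s•b) ((1 : ℝ)•b) s :=
        (hasDerivAt_id s).smul_const b
      have := ha.add hb
      have e : (-1:ℝ)•a + (1:ℝ)•b = b - a := by rw [neg_one_smul, one_smul, neg_add_eq_sub]
      rw [e] at this
      exact this
    exact (hasDerivAt_const s q).prodMk h1
  have hγc : Continuous γ := by
    apply Continuous.prodMk continuous_const
    exact ((continuous_const.sub continuous_id).smul continuous_const).add
      (continuous_id.smul continuous_const)
  have hdiff : ∀ s ∈ Icc (0:ℝ) 1, DifferentiableAt ℝ f (γ s) := fun s hs =>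
    (hf.differentiableOn one_ne_zero).differentiableAt (hSopen.mem_nhds (hseg s hs))
  have hds : ∀ s ∈ uIcc (0:ℝ) 1,
      HasDerivAt (fun s => f (γ s)) (fderiv ℝ f (γ s) ((0:F), b - a)) s := by
    intro s hs
    rw [uIcc_of_le zero_le_one] at hs
    exact (hdiff s hs).hasFDerivAt.comp_hasDerivAt s (hγ s)
  have hcont : ∀ w : F × EuclideanSpace ℝ (Fin P),
      ContinuousOn (fun s => fderiv ℝ f (γ s) w) (uIcc (0:ℝ) 1) := by
    intro w
    rw [uIcc_of_le zero_le_one]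
    exact ((ContinuousLinearMap.apply ℝ ℝ w).continuous.comp_continuousOn
      (hfc.comp hγc.continuousOn hseg))
  have hFTC := intervalIntegral.integral_eq_sub_of_hasDerivAt hds
    ((hcont _).intervalIntegrable)
  have hγ1 : γ 1 = (q, b) := by simp [hγdef]
  have hγ0 : γ 0 = (q, a) := by simp [hγdef]
  rw [hγ1, hγ0] at hFTC
  rw [← hFTC]
  have hv : ((0:F), b - a) = ∑ j, (b j - a j) • ((0:F), (EuclideanSpace.single j 1 :
      EuclideanSpace ℝ (Fin P))) := by
    rw [Prod.ext_iff]
    constructor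
    · rw [Prod.fst_sum]; simp
    · rw [Prod.snd_sum]
      simp only [Prod.smul_snd, smul_zero]
      ext k
      rw [WithLp.ofLp_sum, Finset.sum_apply]
      simp [EuclideanSpace.single_apply, Finset.sum_ite_eq', mul_comm]
  have hexp : ∀ s : ℝ, fderiv ℝ f (γ s) ((0:F), b - a)
      = ∑ j, (b j - a j) * fderiv ℝ f (γ s) ((0:F), EuclideanSpace.single j 1) := by
    intro s
    rw [hv, map_sum]
    apply Finset.sum_congr rfl
    intro j _
    rw [map_smul, smul_eq_mul]
  rw [intervalIntegral.integral_congr (g := fun s => ∑ j, (b j - a j) *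
      fderiv ℝ f (γ s) ((0:F), EuclideanSpace.single j 1)) (fun s _ => hexp s)]
  rw [intervalIntegral.integral_finset_sum]
  · apply Finset.sum_congr rfl
    intro j _
    rw [intervalIntegral.integral_const_mul]
    ring
  · intro j _
    apply IntervalIntegrable.const_mul
    exact ((hcont _).intervalIntegrable)

/-- **Difference of solutions solves a linear homogeneous symmetric hyperbolic system.** -/
theorem difference_solves_linear_system
    (P : ℕ) (r : ℝ≥0∞) (hr : 0 < r)
    (U : Set Pt4) (hUopen : IsOpen U)
    (M : Fin 4 → Pt4 × EuclideanSpace ℝ (Fin P) → Fin P → Fin P → ℝ)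
    (h : Pt4 × EuclideanSpace ℝ (Fin P) → Fin P → ℝ)
    (Θ1 Θ2 : Pt4 → EuclideanSpace ℝ (Fin P))
    (hMsym : ∀ μ, ∀ z ∈ U ×ˢ BallP P r, ∀ i j, M μ z i j = M μ z j i)
    (hMreg : ∀ μ i j, C1Ext (fun z => M μ z i j) (U ×ˢ BallP P r))
    (hhreg : ∀ i, C1Ext (fun z => h z i) (U ×ˢ BallP P r))
    (hM0pos : ∀ z ∈ closure (U ×ˢ BallP P r), ∀ w : Fin P → ℝ, w ≠ 0 →
      0 < ∑ i, ∑ j, w i * M 0 z i j * w j)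
    (hmap1 : ∀ p ∈ U, Θ1 p ∈ BallP P r) (hmap2 : ∀ p ∈ U, Θ2 p ∈ BallP P r)
    (hreg1 : C1Ext Θ1 U) (hreg2 : C1Ext Θ2 U)
    (hPDE1 : ∀ p ∈ U, ∀ i, ∑ μ, ∑ j, M μ (p, Θ1 p) i j * pdQ μ (fun y => Θ1 y j) p
      = h (p, Θ1 p) i)
    (hPDE2 : ∀ p ∈ U, ∀ i, ∑ μ, ∑ j, M μ (p, Θ2 p) i j * pdQ μ (fun y => Θ2 y j) p
      = h (p, Θ2 p) i) :
    -- the linearization matrix H(q)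
    ∀ H : Pt4 → Fin P → Fin P → ℝ,
      (∀ (q : Pt4) (i j : Fin P), H q i j =
        -(∑ μ, ∑ k,
            (∫ s in (0 : ℝ)..1,
              fderiv ℝ (fun Θv => M μ (q, Θv) i k) ((1 - s) • Θ1 q + s • Θ2 q)
                (EuclideanSpace.single j 1)) * pdQ μ (fun y => Θ2 y k) q)
          + ∫ s in (0 : ℝ)..1,
              fderiv ℝ (fun Θv => h (q, Θv) i) ((1 - s) • Θ1 q + s • Θ2 q)
                (EuclideanSpace.single j 1)) →
      ContinuousOn (fun q => H q) U ∧
      (∃ Hext : Pt4 → Fin P → Fin P → ℝ,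
        ContinuousOn (fun q => Hext q) (closure U) ∧ Set.EqOn Hext H U) ∧
      (∀ q ∈ U, ∀ i,
        ∑ μ, ∑ j, M μ (q, Θ1 q) i j * pdQ μ (fun y => Θ2 y j - Θ1 y j) q
          = ∑ j, H q i j * (Θ2 q j - Θ1 q j)) := by
  intro H hH
  have hBopen := ballP_isOpen P r
  have hBconv := ballP_convex P r
  have hSopen : IsOpen (U ×ˢ BallP P r) := hUopen.prod hBopen
  have hclS : closure (U ×ˢ BallP P r) = closure U ×ˢ closure (BallP P r) :=
    closure_prod_eq
  -- values of Θ1, Θ2 on the closure of U lie in the closure of the ball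
  have him1 : Θ1 '' U ⊆ BallP P r := by rintro _ ⟨p, hp, rfl⟩; exact hmap1 p hp
  have him2 : Θ2 '' U ⊆ BallP P r := by rintro _ ⟨p, hp, rfl⟩; exact hmap2 p hp
  have hcl1 : ∀ q ∈ closure U, Θ1 q ∈ closure (BallP P r) := fun q hq =>
    closure_mono him1 (hreg1.2.1.image_closure (mem_image_of_mem _ hq))
  have hcl2 : ∀ q ∈ closure U, Θ2 q ∈ closure (BallP P r) := fun q hq =>
    closure_mono him2 (hreg2.2.1.image_closure (mem_image_of_mem _ hq))
  -- segment membership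
  have hsegU : ∀ q ∈ U, ∀ s ∈ Icc (0:ℝ) 1, (1-s)•Θ1 q + s•Θ2 q ∈ BallP P r :=
    fun q hq s hs => hBconv (hmap1 q hq) (hmap2 q hq) (by linarith [hs.2]) hs.1 (by ring)
  have hsegC : ∀ q ∈ closure U, ∀ s ∈ Icc (0:ℝ) 1,
      (1-s)•Θ1 q + s•Θ2 q ∈ closure (BallP P r) :=
    fun q hq s hs => hBconv.closure (hcl1 q hq) (hcl2 q hq)
      (by linarith [hs.2]) hs.1 (by ring)
  -- the joint parametrization of the segment is continuous
  have hΦcont : ContinuousOn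
      (fun p : Pt4 × ℝ => ((p.1, (1-p.2)•Θ1 p.1 + p.2•Θ2 p.1) :
        Pt4 × EuclideanSpace ℝ (Fin P))) (closure U ×ˢ Icc (0:ℝ) 1) := by
    apply ContinuousOn.prodMk continuous_fst.continuousOn
    apply ContinuousOn.add
    · exact ((continuous_const.sub continuous_snd).continuousOn).smul
        (hreg1.2.1.comp continuous_fst.continuousOn (fun p hp => hp.1))
    · exact (continuous_snd.continuousOn).smul
        (hreg2.2.1.comp continuous_fst.continuousOn (fun p hp => hp.1))
  have hΦmaps : MapsTo
      (fun p : Pt4 × ℝ => ((p.1, (1-p.2)•Θ1 p.1 + p.2•Θ2 p.1) :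
        Pt4 × EuclideanSpace ℝ (Fin P)))
      (closure U ×ˢ Icc (0:ℝ) 1) (closure (U ×ˢ BallP P r)) := by
    rw [hclS]
    intro p hp
    exact ⟨hp.1, hsegC _ hp.1 _ hp.2⟩
  -- continuity of the parametric integrals on the closure of U
  have hIcont : ∀ (f : Pt4 × EuclideanSpace ℝ (Fin P) → ℝ),
      ContinuousOn (fderiv ℝ f) (closure (U ×ˢ BallP P r)) → ∀ (j : Fin P),
      ContinuousOn (fun q => ∫ s in (0:ℝ)..1,
        fderiv ℝ f (q, (1-s)•Θ1 q + s•Θ2 q) ((0:Pt4), EuclideanSpace.single j 1))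
        (closure U) := by
    intro f hfc j
    apply continuousOn_param_integral
    exact (ContinuousLinearMap.apply ℝ ℝ
      ((0:Pt4), (EuclideanSpace.single j 1 : EuclideanSpace ℝ (Fin P)))).continuous.comp_continuousOn
      (hfc.comp hΦcont hΦmaps)
  -- continuity of the derivative factor
  have hDcont : ∀ (μ : Fin 4) (k : Fin P),
      ContinuousOn (fun q => fderiv ℝ Θ2 q (dir4 μ) k) (closure U) := by
    intro μ k
    exact (EuclideanSpace.proj k).continuous.comp_continuousOn
      ((ContinuousLinearMap.apply ℝ (EuclideanSpace ℝ (Fin P))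
        (dir4 μ)).continuous.comp_continuousOn hreg2.2.2)
  -- differentiability on the open sets
  have hdTh1 : ∀ q ∈ U, DifferentiableAt ℝ Θ1 q := fun q hq =>
    (hreg1.1.differentiableOn one_ne_zero).differentiableAt (hUopen.mem_nhds hq)
  have hdTh2 : ∀ q ∈ U, DifferentiableAt ℝ Θ2 q := fun q hq =>
    (hreg2.1.differentiableOn one_ne_zero).differentiableAt (hUopen.mem_nhds hq)
  have hdM : ∀ μ i k, ∀ z ∈ U ×ˢ BallP P r,
      DifferentiableAt ℝ (fun z => M μ z i k) z := fun μ i k z hz =>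
    ((hMreg μ i k).1.differentiableOn one_ne_zero).differentiableAt (hSopen.mem_nhds hz)
  have hdh : ∀ i, ∀ z ∈ U ×ˢ BallP P r,
      DifferentiableAt ℝ (fun z => h z i) z := fun i z hz =>
    ((hhreg i).1.differentiableOn one_ne_zero).differentiableAt (hSopen.mem_nhds hz)
  -- partial derivatives of the components of Θ1, Θ2
  have hpd1 : ∀ q ∈ U, ∀ (μ : Fin 4) (k : Fin P),
      pdQ μ (fun y => Θ1 y k) q = fderiv ℝ Θ1 q (dir4 μ) k := by
    intro q hq μ k
    unfold pdQ
    have := ((EuclideanSpace.proj (𝕜 := ℝ) k).hasFDerivAt.comp q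
      (hdTh1 q hq).hasFDerivAt).fderiv
    rw [show (fun y => Θ1 y k) = (EuclideanSpace.proj (𝕜 := ℝ) k) ∘ Θ1 from rfl, this]
    simp
  have hpd2 : ∀ q ∈ U, ∀ (μ : Fin 4) (k : Fin P),
      pdQ μ (fun y => Θ2 y k) q = fderiv ℝ Θ2 q (dir4 μ) k := by
    intro q hq μ k
    unfold pdQ
    have := ((EuclideanSpace.proj (𝕜 := ℝ) k).hasFDerivAt.comp q
      (hdTh2 q hq).hasFDerivAt).fderiv
    rw [show (fun y => Θ2 y k) = (EuclideanSpace.proj (𝕜 := ℝ) k) ∘ Θ2 from rfl, this]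
    simp
  -- the nice formula for H
  set G : Pt4 → Fin P → Fin P → ℝ := fun q i j =>
    -(∑ μ, ∑ k, (∫ s in (0:ℝ)..1,
        fderiv ℝ (fun z => M μ z i k) (q, (1-s)•Θ1 q + s•Θ2 q)
          ((0:Pt4), EuclideanSpace.single j 1)) * (fderiv ℝ Θ2 q (dir4 μ) k))
    + ∫ s in (0:ℝ)..1, fderiv ℝ (fun z => h z i) (q, (1-s)•Θ1 q + s•Θ2 q)
        ((0:Pt4), EuclideanSpace.single j 1) with hGdef
  have hGcont : ContinuousOn (fun q => G q) (closure U) := by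
    apply continuousOn_pi.mpr; intro i
    apply continuousOn_pi.mpr; intro j
    simp only [hGdef]
    apply ContinuousOn.add
    · apply ContinuousOn.neg
      apply continuousOn_finset_sum; intro μ _
      apply continuousOn_finset_sum; intro k _
      exact (hIcont _ (hMreg μ i k).2.2 j).mul (hDcont μ k)
    · exact hIcont _ (hhreg i).2.2 j
  -- G agrees with H on U
  have hGH : ∀ q ∈ U, ∀ i j, G q i j = H q i j := by
    intro q hq i j
    have hM' : ∀ (μ : Fin 4) (k : Fin P),
        (∫ s in (0:ℝ)..1, fderiv ℝ (fun Θv => M μ (q, Θv) i k)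
          ((1-s) • Θ1 q + s • Θ2 q) (EuclideanSpace.single j 1))
        = ∫ s in (0:ℝ)..1, fderiv ℝ (fun z => M μ z i k)
            (q, (1-s) • Θ1 q + s • Θ2 q) ((0:Pt4), EuclideanSpace.single j 1) := by
      intro μ k
      apply intervalIntegral.integral_congr
      intro s hs
      rw [uIcc_of_le zero_le_one] at hs
      exact partial_fderiv (fun z => M μ z i k) q _
        (hdM μ i k _ ⟨hq, hsegU q hq s hs⟩) _
    have hh' : (∫ s in (0:ℝ)..1, fderiv ℝ (fun Θv => h (q, Θv) i)
          ((1-s) • Θ1 q + s • Θ2 q) (EuclideanSpace.single j 1))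
        = ∫ s in (0:ℝ)..1, fderiv ℝ (fun z => h z i)
            (q, (1-s) • Θ1 q + s • Θ2 q) ((0:Pt4), EuclideanSpace.single j 1) := by
      apply intervalIntegral.integral_congr
      intro s hs
      rw [uIcc_of_le zero_le_one] at hs
      exact partial_fderiv (fun z => h z i) q _
        (hdh i _ ⟨hq, hsegU q hq s hs⟩) _
    have hsum : (∑ μ, ∑ k, (∫ s in (0:ℝ)..1, fderiv ℝ (fun Θv => M μ (q, Θv) i k)
          ((1-s) • Θ1 q + s • Θ2 q) (EuclideanSpace.single j 1))
            * pdQ μ (fun y => Θ2 y k) q)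
        = ∑ μ, ∑ k, (∫ s in (0:ℝ)..1, fderiv ℝ (fun z => M μ z i k)
            (q, (1-s) • Θ1 q + s • Θ2 q) ((0:Pt4), EuclideanSpace.single j 1))
              * (fderiv ℝ Θ2 q (dir4 μ) k) :=
      Finset.sum_congr rfl fun μ _ => Finset.sum_congr rfl fun k _ => by
        rw [hM' μ k, hpd2 q hq μ k]
    rw [hH q i j, hsum, hh']
  have hHGfun : ∀ q ∈ U, G q = H q := fun q hq =>
    funext fun i => funext fun j => hGH q hq i j
  refine ⟨?_, ⟨G, hGcont, fun q hq => hHGfun q hq⟩, ?_⟩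
  · exact (hGcont.mono subset_closure).congr fun q hq => (hHGfun q hq).symm
  -- the PDE computation
  intro q hq i
  -- FTC for the matrices M and the source h
  have hftcM : ∀ (μ : Fin 4) (k : Fin P),
      M μ (q, Θ2 q) i k - M μ (q, Θ1 q) i k
        = ∑ l, (∫ s in (0:ℝ)..1, fderiv ℝ (fun z => M μ z i k)
            (q, (1-s) • Θ1 q + s • Θ2 q) ((0:Pt4), EuclideanSpace.single l 1))
              * (Θ2 q l - Θ1 q l) := fun μ k =>
    ftc_seg (fun z => M μ z i k) (U ×ˢ BallP P r) hSopen (hMreg μ i k).1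
      ((hMreg μ i k).2.2.mono subset_closure) q (Θ1 q) (Θ2 q)
      (fun s hs => ⟨hq, hsegU q hq s hs⟩)
  have hftch : h (q, Θ2 q) i - h (q, Θ1 q) i
      = ∑ l, (∫ s in (0:ℝ)..1, fderiv ℝ (fun z => h z i)
          (q, (1-s) • Θ1 q + s • Θ2 q) ((0:Pt4), EuclideanSpace.single l 1))
            * (Θ2 q l - Θ1 q l) :=
    ftc_seg (fun z => h z i) (U ×ˢ BallP P r) hSopen (hhreg i).1
      ((hhreg i).2.2.mono subset_closure) q (Θ1 q) (Θ2 q)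
      (fun s hs => ⟨hq, hsegU q hq s hs⟩)
  -- linearity of the partial derivative in the difference
  have hpdsub : ∀ (μ : Fin 4) (l : Fin P),
      pdQ μ (fun y => Θ2 y l - Θ1 y l) q
        = pdQ μ (fun y => Θ2 y l) q - pdQ μ (fun y => Θ1 y l) q := by
    intro μ l
    have hd1 : DifferentiableAt ℝ (fun y => Θ1 y l) q :=
      ((EuclideanSpace.proj (𝕜 := ℝ) l).differentiable.differentiableAt).comp q (hdTh1 q hq)
    have hd2 : DifferentiableAt ℝ (fun y => Θ2 y l) q :=
      ((EuclideanSpace.proj (𝕜 := ℝ) l).differentiable.differentiableAt).comp q (hdTh2 q hq)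
    unfold pdQ
    rw [fderiv_fun_sub hd2 hd1]
    simp
  -- abbreviations
  set B : Fin 4 → Fin P → Fin P → ℝ := fun μ k l =>
    ∫ s in (0:ℝ)..1, fderiv ℝ (fun z => M μ z i k)
      (q, (1-s) • Θ1 q + s • Θ2 q) ((0:Pt4), EuclideanSpace.single l 1) with hBdef
  set A : Fin P → ℝ := fun l =>
    ∫ s in (0:ℝ)..1, fderiv ℝ (fun z => h z i)
      (q, (1-s) • Θ1 q + s • Θ2 q) ((0:Pt4), EuclideanSpace.single l 1) with hAdef
  set v : Fin P → ℝ := fun l => Θ2 q l - Θ1 q l with hvdef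
  set T : Fin 4 → Fin P → ℝ := fun μ k => fderiv ℝ Θ2 q (dir4 μ) k with hTdef
  -- replace H by G on the right-hand side
  have hRHS : ∑ l, H q i l * v l = ∑ l, (-(∑ μ, ∑ k, B μ k l * T μ k) + A l) * v l :=
    Finset.sum_congr rfl fun l _ => by rw [← hGH q hq i l]
  calc ∑ μ, ∑ l, M μ (q, Θ1 q) i l * pdQ μ (fun y => Θ2 y l - Θ1 y l) q
      = ∑ μ, ∑ l, (M μ (q, Θ1 q) i l * pdQ μ (fun y => Θ2 y l) q
          - M μ (q, Θ1 q) i l * pdQ μ (fun y => Θ1 y l) q) :=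
        Finset.sum_congr rfl fun μ _ => Finset.sum_congr rfl fun l _ => by
          rw [hpdsub μ l]; ring
    _ = (∑ μ, ∑ l, M μ (q, Θ1 q) i l * pdQ μ (fun y => Θ2 y l) q)
          - ∑ μ, ∑ l, M μ (q, Θ1 q) i l * pdQ μ (fun y => Θ1 y l) q := by
        rw [← Finset.sum_sub_distrib]
        exact Finset.sum_congr rfl fun μ _ => by rw [Finset.sum_sub_distrib]
    _ = (∑ μ, ∑ l, M μ (q, Θ1 q) i l * pdQ μ (fun y => Θ2 y l) q) - h (q, Θ1 q) i := by
        rw [hPDE1 q hq i]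
    _ = ((∑ μ, ∑ l, M μ (q, Θ2 q) i l * pdQ μ (fun y => Θ2 y l) q)
          - ∑ μ, ∑ l, (M μ (q, Θ2 q) i l - M μ (q, Θ1 q) i l)
              * pdQ μ (fun y => Θ2 y l) q) - h (q, Θ1 q) i := by
        rw [← Finset.sum_sub_distrib]
        congr 1
        exact Finset.sum_congr rfl fun μ _ => by
          rw [← Finset.sum_sub_distrib]
          exact Finset.sum_congr rfl fun l _ => by ring
    _ = (h (q, Θ2 q) i - h (q, Θ1 q) i)
          - ∑ μ, ∑ k, (M μ (q, Θ2 q) i k - M μ (q, Θ1 q) i k)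
              * pdQ μ (fun y => Θ2 y k) q := by
        rw [hPDE2 q hq i]; ring
    _ = (∑ l, A l * v l) - ∑ μ, ∑ k, (∑ l, B μ k l * v l) * T μ k := by
        rw [hftch]
        congr 1
        exact Finset.sum_congr rfl fun μ _ => Finset.sum_congr rfl fun k _ => by
          rw [hftcM μ k, hpd2 q hq μ k]
    _ = (∑ l, A l * v l) - ∑ μ, ∑ k, ∑ l, B μ k l * v l * T μ k := by
        congr 1
        exact Finset.sum_congr rfl fun μ _ => Finset.sum_congr rfl fun k _ =>
          Finset.sum_mul _ _ _
    _ = (∑ l, A l * v l) - ∑ l, ∑ μ, ∑ k, B μ k l * v l * T μ k := by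
        congr 1
        calc ∑ μ, ∑ k, ∑ l, B μ k l * v l * T μ k
            = ∑ μ, ∑ l, ∑ k, B μ k l * v l * T μ k :=
              Finset.sum_congr rfl fun μ _ => Finset.sum_comm
          _ = ∑ l, ∑ μ, ∑ k, B μ k l * v l * T μ k := Finset.sum_comm
    _ = ∑ l, (-(∑ μ, ∑ k, B μ k l * T μ k) + A l) * v l := by
        rw [← Finset.sum_sub_distrib]
        refine Finset.sum_congr rfl fun l _ => ?_
        have hmul : (∑ μ, ∑ k, B μ k l * T μ k) * v l
            = ∑ μ, ∑ k, B μ k l * v l * T μ k := by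
          rw [Finset.sum_mul]
          exact Finset.sum_congr rfl fun μ _ => by
            rw [Finset.sum_mul]
            exact Finset.sum_congr rfl fun k _ => by ring
        rw [add_mul, neg_mul, hmul]
        ring
    _ = ∑ l, H q i l * v l := hRHS.symm
end
end

section
/- (Non-timelike lateral boundary of the refined domains) Let ξ0 ∈ ℝ², ū0 > 0, u0 < 0, and constants k0, k1, 𝔡 > 0 with 𝔡 < ū0 and 𝔡 < 1/|u0|. Let (ū,u) ∈ ℬ = (0, ū0 − 𝔡) × (−∞, −1/(1/|u0| − 𝔡)) and let ξ ∈ ℝ² satisfy |ξ − ξ0| = r(ū,u) where r(ū,u) = k0 + k1·|ū0 − ū|·| 1/|u0| − 1/|u| |. Suppose e1, e2 ∈ ℂ and e3, e4, e5 ∈ ℝ with e3 > 0 and k1·𝔡 ≥ 2·max{ (|u|/√e3)·√(|e1|² + |e2|²), u²·√(e4² + e5²) }. Set ξ̂ = (ξ − ξ0)/|ξ − ξ0| and define θ(L) = k1·| 1/|u| − 1/|u0| |·e3, θ(N) = ξ̂¹·e4 + ξ̂²·e5 + k1·|ū0 − ū|/u², θ(D) = ξ̂¹·e1 + ξ̂²·e2.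 Then θ(L) ≥ 0, θ(N) ≥ 0, and the Hermitian 2×2 matrix with rows (θ(N), θ(D)) and (conj(θ(D)), θ(L)) is positive semidefinite. -/
-- auxiliary: 2x2 hermitian PSD criterion
lemma psd_aux (N L : ℝ) (c z w : ℂ) (hN : 0 ≤ N) (hL : 0 ≤ L)
    (hc : Complex.normSq c ≤ N * L) :
    0 ≤ N * Complex.normSq z + L * Complex.normSq w
      + 2 * ((starRingEnd ℂ) z * c * w).re := by
  set az := ‖z‖ with haz
  set ac := ‖c‖ with hac
  set aw := ‖w‖ with haw
  have hazn : 0 ≤ az := norm_nonneg _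
  have hacn : 0 ≤ ac := norm_nonneg _
  have hawn : 0 ≤ aw := norm_nonneg _
  have habs : ‖(starRingEnd ℂ) z * c * w‖ = az * ac * aw := by
    simp [map_mul, haz, hac, haw]
  have h1 : -(az * ac * aw) ≤ ((starRingEnd ℂ) z * c * w).re := by
    have h2 := Complex.abs_re_le_norm ((starRingEnd ℂ) z * c * w)
    rw [habs] at h2
    have := abs_nonneg (((starRingEnd ℂ) z * c * w).re)
    linarith [le_abs_self (((starRingEnd ℂ) z * c * w).re),
      neg_abs_le (((starRingEnd ℂ) z * c * w).re)]
  have hnz : Complex.normSq z = az ^ 2 := (Complex.sq_norm z).symm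
  have hnw : Complex.normSq w = aw ^ 2 := (Complex.sq_norm w).symm
  have hnc : Complex.normSq c = ac ^ 2 := (Complex.sq_norm c).symm
  rw [hnc] at hc
  set sN := Real.sqrt N with hsN
  set sL := Real.sqrt L with hsL
  have hsN2 : sN ^ 2 = N := Real.sq_sqrt hN
  have hsL2 : sL ^ 2 = L := Real.sq_sqrt hL
  have hsNn : 0 ≤ sN := Real.sqrt_nonneg _
  have hsLn : 0 ≤ sL := Real.sqrt_nonneg _
  have hcle : ac ≤ sN * sL := by
    have h4 : ac = Real.sqrt (ac ^ 2) := (Real.sqrt_sq hacn).symm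
    rw [h4, hsN, hsL, ← Real.sqrt_mul hN L]
    exact Real.sqrt_le_sqrt hc
  rw [hnz, hnw]
  nlinarith [sq_nonneg (sN * az - sL * aw), mul_nonneg hazn hawn,
    mul_le_mul_of_nonneg_right hcle (mul_nonneg hazn hawn)]

-- auxiliary: Cauchy-Schwarz with unit real coefficients
lemma cs_aux (a b : ℝ) (e1 e2 : ℂ) (hab : a ^ 2 + b ^ 2 = 1) :
    Complex.normSq ((a : ℂ) * e1 + (b : ℂ) * e2)
      ≤ Complex.normSq e1 + Complex.normSq e2 := by
  set x1 := ‖e1‖ with hx1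
  set x2 := ‖e2‖ with hx2
  set y := ‖(a : ℂ) * e1 + (b : ℂ) * e2‖ with hy
  have hyn : 0 ≤ y := by rw [hy]; exact norm_nonneg _
  have htri : y ≤ |a| * x1 + |b| * x2 := by
    calc y = ‖(a : ℂ) * e1 + (b : ℂ) * e2‖ := hy
      _ ≤ ‖(a : ℂ) * e1‖ + ‖(b : ℂ) * e2‖ :=
          norm_add_le _ _
      _ = |a| * x1 + |b| * x2 := by
          rw [norm_mul, norm_mul, Complex.norm_real, Complex.norm_real, Real.norm_eq_abs, Real.norm_eq_abs, hx1, hx2]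
  have hy2 : y ^ 2 ≤ (|a| * x1 + |b| * x2) ^ 2 := pow_le_pow_left₀ hyn htri 2
  have h5 : Complex.normSq ((a : ℂ) * e1 + (b : ℂ) * e2) = y ^ 2 := by
    rw [hy]; exact (Complex.sq_norm _).symm
  have h6 : Complex.normSq e1 = x1 ^ 2 := (Complex.sq_norm _).symm
  have h7 : Complex.normSq e2 = x2 ^ 2 := (Complex.sq_norm _).symm
  rw [h5, h6, h7]
  have hx1n : 0 ≤ x1 := norm_nonneg _
  have hx2n : 0 ≤ x2 := norm_nonneg _
  clear_value x1 x2 y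
  nlinarith [hy2, sq_nonneg (|a| * x2 - |b| * x1), sq_abs a, sq_abs b, hab,
    hx1n, hx2n]

-- auxiliary: squaring the first max bound
lemma ebound_aux (u e3 E k1 d : ℝ) (he3 : 0 < e3) (hEn : 0 ≤ E)
    (h : 2 * ((|u| / Real.sqrt e3) * E) ≤ k1 * d) :
    4 * u ^ 2 * E ^ 2 ≤ k1 ^ 2 * d ^ 2 * e3 := by
  have hse32 : Real.sqrt e3 ^ 2 = e3 := Real.sq_sqrt he3.le
  have hse3 : 0 < Real.sqrt e3 := Real.sqrt_pos.mpr he3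
  have h0 : (0:ℝ) ≤ 2 * ((|u| / Real.sqrt e3) * E) := by positivity
  have hsq : (2 * ((|u| / Real.sqrt e3) * E)) ^ 2 ≤ (k1 * d) ^ 2 :=
    pow_le_pow_left₀ h0 h 2
  have hexp : (2 * ((|u| / Real.sqrt e3) * E)) ^ 2 = 4 * u ^ 2 * E ^ 2 / e3 := by
    rw [mul_pow, mul_pow, div_pow, sq_abs, hse32]; ring
  rw [hexp, div_le_iff₀ he3] at hsq
  nlinarith [hsq]

-- auxiliary: the core arithmetic estimates
lemma key_aux (a b e4 e5 S E u k1 d e3 A B : ℝ)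
    (hab : a ^ 2 + b ^ 2 = 1) (hS2 : S ^ 2 = e4 ^ 2 + e5 ^ 2) (hSn : 0 ≤ S)
    (hEn : 0 ≤ E) (hu2 : 0 < u ^ 2) (hk1 : 0 < k1) (hd : 0 < d) (he3 : 0 < e3)
    (hA : d ≤ A) (hB : d ≤ B)
    (hK2 : 2 * (u ^ 2 * S) ≤ k1 * d)
    (hE4 : 4 * u ^ 2 * E ^ 2 ≤ k1 ^ 2 * d ^ 2 * e3) :
    0 ≤ a * e4 + b * e5 + k1 * B / u ^ 2 ∧
      E ^ 2 ≤ (a * e4 + b * e5 + k1 * B / u ^ 2) * (k1 * A * e3) := by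
  have hdot : -S ≤ a * e4 + b * e5 := by
    have hsq : (a * e4 + b * e5) ^ 2 ≤ S ^ 2 := by
      rw [hS2]; nlinarith [sq_nonneg (a * e5 - b * e4)]
    nlinarith [hsq, hSn]
  set N := a * e4 + b * e5 + k1 * B / u ^ 2 with hN
  have hNlb : k1 * B ≤ 2 * u ^ 2 * N := by
    have hkd : k1 * d ≤ k1 * B := by nlinarith
    have hN' : 2 * u ^ 2 * N = 2 * (u ^ 2 * (a * e4 + b * e5)) + 2 * (k1 * B) := by
      rw [hN]; have h' : u ^ 2 * (k1 * B / u ^ 2) = k1 * B := mul_div_cancel₀ _ hu2.ne'; linear_combination 2 * h'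
    rw [hN']
    linarith [mul_le_mul_of_nonneg_left hdot (le_of_lt hu2), hK2]
  clear_value N
  have part2 : 0 ≤ N := by nlinarith [hNlb, hu2, mul_pos hk1 (lt_of_lt_of_le hd hB)]
  refine ⟨part2, ?_⟩
  have hL' : k1 * d * e3 ≤ k1 * A * e3 :=
    mul_le_mul_of_nonneg_right (mul_le_mul_of_nonneg_left hA hk1.le) he3.le
  have hprod : (k1 * B) * (k1 * d * e3) ≤ (2 * u ^ 2 * N) * (k1 * A * e3) :=
    mul_le_mul hNlb hL' (by positivity) (by nlinarith [part2, hu2])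
  have h21 : k1 ^ 2 * d ^ 2 * e3 ≤ 2 * ((k1 * B) * (k1 * d * e3)) := by
    have h1 := mul_le_mul_of_nonneg_left hB (by positivity : (0:ℝ) ≤ k1 ^ 2 * d * e3)
    have h2 : (0:ℝ) ≤ k1 ^ 2 * d ^ 2 * e3 := by positivity
    nlinarith [h1, h2]
  have h22 : 4 * u ^ 2 * (E ^ 2) ≤ 4 * u ^ 2 * (N * (k1 * A * e3)) := by
    linarith [hprod, h21, hE4]
  exact le_of_mul_le_mul_left h22 (by positivity : (0:ℝ) < 4 * u ^ 2)

set_option maxHeartbeats 1000000 in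
/-- **Non-timelike lateral boundary of the refined domains.** -/
theorem nontimelike_lateral_boundary
    (ξ1 ξ2 ξ01 ξ02 ub0 u0 k0 k1 d ub u : ℝ)
    (e1 e2 : ℂ) (e3 e4 e5 : ℝ)
    (hub0 : 0 < ub0) (hu0 : u0 < 0)
    (hk0 : 0 < k0) (hk1 : 0 < k1) (hd : 0 < d)
    (hd1 : d < ub0) (hd2 : d < 1 / |u0|)
    (hub : 0 < ub) (hub' : ub < ub0 - d)
    (hu : u < -(1 / (1 / |u0| - d)))
    (hr : Real.sqrt ((ξ1 - ξ01) ^ 2 + (ξ2 - ξ02) ^ 2)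
        = k0 + k1 * |ub0 - ub| * abs (1 / |u0| - 1 / |u|))
    (he3 : 0 < e3)
    (hK : 2 * max ((|u| / Real.sqrt e3) * Real.sqrt (Complex.normSq e1 + Complex.normSq e2))
            (u ^ 2 * Real.sqrt (e4 ^ 2 + e5 ^ 2)) ≤ k1 * d) :
    0 ≤ k1 * abs (1 / |u| - 1 / |u0|) * e3 ∧
    0 ≤ (ξ1 - ξ01) / Real.sqrt ((ξ1 - ξ01) ^ 2 + (ξ2 - ξ02) ^ 2) * e4
        + (ξ2 - ξ02) / Real.sqrt ((ξ1 - ξ01) ^ 2 + (ξ2 - ξ02) ^ 2) * e5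
        + k1 * |ub0 - ub| / u ^ 2 ∧
    ∀ z w : ℂ,
      0 ≤ ((ξ1 - ξ01) / Real.sqrt ((ξ1 - ξ01) ^ 2 + (ξ2 - ξ02) ^ 2) * e4
            + (ξ2 - ξ02) / Real.sqrt ((ξ1 - ξ01) ^ 2 + (ξ2 - ξ02) ^ 2) * e5
            + k1 * |ub0 - ub| / u ^ 2) * Complex.normSq z
          + k1 * abs (1 / |u| - 1 / |u0|) * e3 * Complex.normSq w
          + 2 * ((starRingEnd ℂ) z *
              (Complex.ofReal ((ξ1 - ξ01) / Real.sqrt ((ξ1 - ξ01) ^ 2 + (ξ2 - ξ02) ^ 2)) * e1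
               + Complex.ofReal ((ξ2 - ξ02) / Real.sqrt ((ξ1 - ξ01) ^ 2 + (ξ2 - ξ02) ^ 2)) * e2)
              * w).re := by
  -- basic setup about u
  have hu0abs : 0 < |u0| := abs_pos.mpr (ne_of_lt hu0)
  have hc0 : 0 < 1 / |u0| - d := by linarith
  have huneg : u < 0 := by
    have : 0 < 1 / (1 / |u0| - d) := by positivity
    linarith
  have huabs : |u| = -u := abs_of_neg huneg
  have hugt : 1 / (1 / |u0| - d) < |u| := by rw [huabs]; linarith
  have hinv : 1 / |u| < 1 / |u0| - d := by
    have h0 : (0:ℝ) < 1 / (1 / |u0| - d) := by positivity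
    have := one_div_lt_one_div_of_lt h0 hugt
    rwa [one_div_one_div] at this
  have hA : d ≤ 1 / |u0| - 1 / |u| := by linarith
  have habsA : abs (1 / |u| - 1 / |u0|) = 1 / |u0| - 1 / |u| := by
    rw [abs_sub_comm]
    exact abs_of_pos (by linarith)
  have habsA' : abs (1 / |u0| - 1 / |u|) = 1 / |u0| - 1 / |u| :=
    abs_of_pos (by linarith)
  have hB : d ≤ ub0 - ub := by linarith
  have habsB : |ub0 - ub| = ub0 - ub := abs_of_pos (by linarith)
  have hune : u ≠ 0 := ne_of_lt huneg
  have hu2 : (0:ℝ) < u ^ 2 := by positivity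
  -- the radius
  set R := Real.sqrt ((ξ1 - ξ01) ^ 2 + (ξ2 - ξ02) ^ 2) with hR
  have hRpos : 0 < R := by
    rw [hr, habsB, habsA']
    have h9 : 0 < k1 * (ub0 - ub) * (1 / |u0| - 1 / |u|) :=
      mul_pos (mul_pos hk1 (by linarith)) (by linarith)
    linarith
  have hR2 : R ^ 2 = (ξ1 - ξ01) ^ 2 + (ξ2 - ξ02) ^ 2 := Real.sq_sqrt (by positivity)
  clear_value R
  set a := (ξ1 - ξ01) / R with ha
  set b := (ξ2 - ξ02) / R with hb
  have hab : a ^ 2 + b ^ 2 = 1 := by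
    rw [ha, hb, div_pow, div_pow]
    field_simp
    linarith [hR2]
  clear_value a b
  -- part 1
  have part1 : 0 ≤ k1 * abs (1 / |u| - 1 / |u0|) * e3 := by positivity
  -- extract the two components of hK
  set S := Real.sqrt (e4 ^ 2 + e5 ^ 2) with hS
  set E := Real.sqrt (Complex.normSq e1 + Complex.normSq e2) with hE
  have hS2 : S ^ 2 = e4 ^ 2 + e5 ^ 2 := Real.sq_sqrt (by positivity)
  have hSn : 0 ≤ S := Real.sqrt_nonneg _
  have hE2 : E ^ 2 = Complex.normSq e1 + Complex.normSq e2 :=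
    Real.sq_sqrt (add_nonneg (Complex.normSq_nonneg _) (Complex.normSq_nonneg _))
  have hEn : 0 ≤ E := Real.sqrt_nonneg _
  have hK2 : 2 * (u ^ 2 * S) ≤ k1 * d :=
    le_trans (mul_le_mul_of_nonneg_left
      (le_max_right ((|u| / Real.sqrt e3) * E) (u ^ 2 * S)) (by norm_num)) hK
  have hK1 : 2 * ((|u| / Real.sqrt e3) * E) ≤ k1 * d :=
    le_trans (mul_le_mul_of_nonneg_left
      (le_max_left ((|u| / Real.sqrt e3) * E) (u ^ 2 * S)) (by norm_num)) hK
  clear_value S E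
  have hE4 : 4 * u ^ 2 * E ^ 2 ≤ k1 ^ 2 * d ^ 2 * e3 := ebound_aux u e3 E k1 d he3 hEn hK1
  obtain ⟨part2, hprod⟩ := key_aux a b e4 e5 S E u k1 d e3
    (1 / |u0| - 1 / |u|) (ub0 - ub) hab hS2 hSn hEn hu2 hk1 hd he3 hA hB hK2 hE4
  rw [habsA] at part1
  rw [habsB, habsA]
  refine ⟨part1, part2, ?_⟩
  intro z w
  have hcs : Complex.normSq ((a : ℂ) * e1 + (b : ℂ) * e2)
      ≤ Complex.normSq e1 + Complex.normSq e2 := cs_aux a b e1 e2 hab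
  have hcbound : Complex.normSq ((a : ℂ) * e1 + (b : ℂ) * e2)
      ≤ (a * e4 + b * e5 + k1 * (ub0 - ub) / u ^ 2) * (k1 * (1 / |u0| - 1 / |u|) * e3) := by
    refine le_trans ?_ hprod
    rw [← hE2] at hcs
    exact hcs
  exact psd_aux _ _ ((a : ℂ) * e1 + (b : ℂ) * e2) z w part2
    (by positivity) hcbound
end

section
/- (Frame bounds in the far-field region imply the boundary positivity hypotheses) Let 𝔡 = 10⁻³ and k1 = 1/(18𝔡), and let a, 𝔄 ∈ ℝ with 0 < |𝔄| ≤ |a| ≤ 10⁻³. Let ū ∈ (0,2), u ≤ −𝔡⁻¹, and ξ ∈ ℝ² with |ξ| < 4·|a/𝔄|. Set ρ = 𝔄²·ū − u and e_{a,𝔄}(ξ) = (a/2)·(1 + (𝔄²/a²)·|ξ|²). Let f1, f2 ∈ ℂ and f3, f4, f5 ∈ ℝ with |f_i| ≤ 5 for i = 1,…,5, and define e1 = e_{a,𝔄}(ξ)/ρ + f1/u², e2 = i·e_{a,𝔄}(ξ)/ρ + f2/u², e3 = 1 + f3/u², e4 = f4/u³, e5 = f5/u³. Then e3 ≥ (3/4)²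 > 0 and k1·𝔡 ≥ 2·max{ (|u|/√e3)·√(|e1|² + |e2|²), u²·√(e4² + e5²) }. -/
set_option maxHeartbeats 2000000 in
theorem frame_bounds_far_field_aux
    (a A ξ1 ξ2 ub u : ℝ) (f1 f2 : ℂ) (f3 f4 f5 : ℝ)
    (hA0 : 0 < |A|) (hAa : |A| ≤ |a|) (ha : |a| ≤ 1 / 1000)
    (hub : 0 < ub) (hub2 : ub < 2) (hu : u ≤ -1000)
    (hξ : Real.sqrt (ξ1 ^ 2 + ξ2 ^ 2) < 4 * |a / A|)
    (hf1 : ‖f1‖ ≤ 5) (hf2 : ‖f2‖ ≤ 5)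
    (hf3 : |f3| ≤ 5) (hf4 : |f4| ≤ 5) (hf5 : |f5| ≤ 5)
    (ρ eaA : ℝ) (e1 e2 : ℂ) (e3 e4 e5 : ℝ)
    (hρdef : ρ = A ^ 2 * ub - u)
    (heaAdef : eaA = (a / 2) * (1 + (A ^ 2 / a ^ 2) * (ξ1 ^ 2 + ξ2 ^ 2)))
    (he1def : e1 = Complex.ofReal (eaA / ρ) + f1 / (Complex.ofReal u) ^ 2)
    (he2def : e2 = Complex.I * Complex.ofReal (eaA / ρ) + f2 / (Complex.ofReal u) ^ 2)
    (he3def : e3 = 1 + f3 / u ^ 2)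
    (he4def : e4 = f4 / u ^ 3)
    (he5def : e5 = f5 / u ^ 3) :
    (3 / 4 : ℝ) ^ 2 ≤ e3 ∧ 0 < e3 ∧
      2 * max ((|u| / Real.sqrt e3) * Real.sqrt (Complex.normSq e1 + Complex.normSq e2))
          (u ^ 2 * Real.sqrt (e4 ^ 2 + e5 ^ 2))
        ≤ (1 / (18 * (1 / 1000))) * (1 / 1000) := by
  have hu0 : u < 0 := by linarith
  have huabs : |u| = -u := abs_of_neg hu0
  have hune : u ≠ 0 := ne_of_lt hu0
  have hu2 : (1000000 : ℝ) ≤ u ^ 2 := by nlinarith [mul_nonneg (by linarith : (0:ℝ) ≤ -u - 1000) (by linarith : (0:ℝ) ≤ -u)]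
  have hu2pos : (0 : ℝ) < u ^ 2 := by positivity
  -- e3 bounds
  have hf3' : -5 ≤ f3 := (abs_le.mp hf3).1
  have hdiv3 : (-5 : ℝ) / u ^ 2 ≤ f3 / u ^ 2 :=
    div_le_div_of_nonneg_right hf3' hu2pos.le |>.trans_eq rfl
  have hdiv3' : (-5 : ℝ) / 1000000 ≤ (-5 : ℝ) / u ^ 2 := by
    rw [div_le_div_iff₀ (by norm_num) hu2pos]; linarith
  have he3 : (3 / 4 : ℝ) ^ 2 ≤ e3 := by
    rw [he3def]; linarith
  have he3pos : 0 < e3 := lt_of_lt_of_le (by norm_num) he3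
  refine ⟨he3, he3pos, ?_⟩
  -- a, A facts
  have haA : A ≠ 0 := fun h => by simp [h] at hA0
  have ha0 : a ≠ 0 := fun h => by rw [h, abs_zero] at hAa; exact absurd (lt_of_lt_of_le hA0 hAa) (lt_irrefl 0)
  have hA2 : 0 < A ^ 2 := by positivity
  have ha2 : 0 < a ^ 2 := by positivity
  -- bound on |ξ|²
  have hs0 : (0 : ℝ) ≤ ξ1 ^ 2 + ξ2 ^ 2 := by positivity
  have hb : (0 : ℝ) < 4 * |a / A| := by
    have : a / A ≠ 0 := div_ne_zero ha0 haA
    positivity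
  have hs : ξ1 ^ 2 + ξ2 ^ 2 < (4 * |a / A|) ^ 2 := by
    have := (Real.sqrt_lt' hb).mp hξ
    exact this
  have hs2 : ξ1 ^ 2 + ξ2 ^ 2 < 16 * (a ^ 2 / A ^ 2) := by
    have heq : (4 * |a / A|) ^ 2 = 16 * (a ^ 2 / A ^ 2) := by
      rw [mul_pow, sq_abs, div_pow]; ring
    rwa [heq] at hs
  have ht : (A ^ 2 / a ^ 2) * (ξ1 ^ 2 + ξ2 ^ 2) < 16 := by
    have key : (A ^ 2 / a ^ 2) * (16 * (a ^ 2 / A ^ 2)) = 16 := by field_simp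
    calc (A ^ 2 / a ^ 2) * (ξ1 ^ 2 + ξ2 ^ 2)
        < (A ^ 2 / a ^ 2) * (16 * (a ^ 2 / A ^ 2)) :=
          mul_lt_mul_of_pos_left hs2 (by positivity)
      _ = 16 := key
  have ht0 : 0 ≤ (A ^ 2 / a ^ 2) * (ξ1 ^ 2 + ξ2 ^ 2) := by positivity
  -- |eaA| ≤ 17/2000
  have heaA : |eaA| ≤ 17 / 2000 := by
    rw [heaAdef, abs_mul]
    have h1 : |a / 2| ≤ 1 / 2000 := by rw [abs_div]; simp only [abs_two]; linarith [abs_div a 2]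
    have h2 : |1 + (A ^ 2 / a ^ 2) * (ξ1 ^ 2 + ξ2 ^ 2)| ≤ 17 := by
      rw [abs_of_nonneg (by linarith)]; linarith
    calc |a / 2| * |1 + (A ^ 2 / a ^ 2) * (ξ1 ^ 2 + ξ2 ^ 2)| ≤ (1 / 2000) * 17 := by
          apply mul_le_mul h1 h2 (abs_nonneg _) (by norm_num)
      _ = 17 / 2000 := by norm_num
  -- ρ ≥ |u|
  have hρ : |u| ≤ ρ := by
    have h0 : 0 ≤ A ^ 2 * ub := by positivity
    rw [hρdef, huabs]; linarith
  have hρpos : 0 < ρ := lt_of_lt_of_le (by rw [huabs]; linarith) hρ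
  have hx : |eaA / ρ| ≤ (17 / 2000) / |u| := by
    rw [abs_div, abs_of_pos hρpos]
    have h1 : |eaA| / ρ ≤ |eaA| / |u| :=
      div_le_div_of_nonneg_left (abs_nonneg _) (by rw [huabs]; linarith) hρ
    have h2 : |eaA| / |u| ≤ (17 / 2000) / |u| :=
      div_le_div_of_nonneg_right heaA (by rw [huabs]; linarith)
    linarith
  -- |f_i / u²| ≤ 5/u² ≤ (1/200)/|u|
  have hufrac : (5 : ℝ) / u ^ 2 ≤ (1 / 200) / |u| := by
    have key : 0 ≤ u ^ 2 + 1000 * u := by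
      have m : 0 ≤ (-u) * (-(u + 1000)) := mul_nonneg (by linarith) (by linarith)
      have meq : (-u) * (-(u + 1000)) = u ^ 2 + 1000 * u := by ring
      linarith
    rw [huabs, div_le_div_iff₀ hu2pos (by linarith)]
    linarith
  have habs1 : ‖e1‖ ≤ (27 / 2000) / |u| := by
    have h1 : ‖e1‖ ≤ |eaA / ρ| + ‖f1‖ / u ^ 2 := by
      rw [he1def]
      calc ‖Complex.ofReal (eaA / ρ) + f1 / (Complex.ofReal u) ^ 2‖
          ≤ ‖Complex.ofReal (eaA / ρ)‖ +
              ‖f1 / (Complex.ofReal u) ^ 2‖ := norm_add_le _ _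
        _ = |eaA / ρ| + ‖f1‖ / u ^ 2 := by
            rw [Complex.norm_real, Real.norm_eq_abs, norm_div, norm_pow, Complex.norm_real, Real.norm_eq_abs, sq_abs]
    have h2 : ‖f1‖ / u ^ 2 ≤ 5 / u ^ 2 := div_le_div_of_nonneg_right hf1 hu2pos.le
    have : (17 / 2000) / |u| + (1 / 200) / |u| = (27 / 2000) / |u| := by
      rw [← add_div]; norm_num
    linarith
  have habs2 : ‖e2‖ ≤ (27 / 2000) / |u| := by
    have h1 : ‖e2‖ ≤ |eaA / ρ| + ‖f2‖ / u ^ 2 := by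
      rw [he2def]
      calc ‖Complex.I * Complex.ofReal (eaA / ρ) + f2 / (Complex.ofReal u) ^ 2‖
          ≤ ‖Complex.I * Complex.ofReal (eaA / ρ)‖ +
              ‖f2 / (Complex.ofReal u) ^ 2‖ := norm_add_le _ _
        _ = |eaA / ρ| + ‖f2‖ / u ^ 2 := by
            rw [norm_mul, Complex.norm_I, one_mul, Complex.norm_real, Real.norm_eq_abs, norm_div, norm_pow,
              Complex.norm_real, Real.norm_eq_abs, sq_abs]
    have h2 : ‖f2‖ / u ^ 2 ≤ 5 / u ^ 2 := div_le_div_of_nonneg_right hf2 hu2pos.le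
    have : (17 / 2000) / |u| + (1 / 200) / |u| = (27 / 2000) / |u| := by
      rw [← add_div]; norm_num
    linarith
  have huabspos : (0 : ℝ) < |u| := by rw [huabs]; linarith
  -- first max term ≤ 1/36
  have hS : Complex.normSq e1 + Complex.normSq e2 ≤ ((1 / 48) / |u|) ^ 2 := by
    have h1 : Complex.normSq e1 ≤ ((27 / 2000) / |u|) ^ 2 := by
      rw [← Complex.sq_norm]
      exact pow_le_pow_left₀ (norm_nonneg _) habs1 2
    have h2 : Complex.normSq e2 ≤ ((27 / 2000) / |u|) ^ 2 := by
      rw [← Complex.sq_norm]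
      exact pow_le_pow_left₀ (norm_nonneg _) habs2 2
    have h3 : 2 * ((27 / 2000) / |u|) ^ 2 ≤ ((1 / 48) / |u|) ^ 2 := by
      have meq : ((1 / 48) / |u|) ^ 2 - 2 * ((27 / 2000) / |u|) ^ 2
          = ((1 / 48 : ℝ) ^ 2 - 2 * (27 / 2000) ^ 2) * (1 / |u|) ^ 2 := by ring
      have m : 0 ≤ ((1 / 48 : ℝ) ^ 2 - 2 * (27 / 2000) ^ 2) * (1 / |u|) ^ 2 :=
        mul_nonneg (by norm_num) (sq_nonneg _)
      linarith
    linarith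
  have hsqrtS : Real.sqrt (Complex.normSq e1 + Complex.normSq e2) ≤ (1 / 48) / |u| := by
    have h := Real.sqrt_le_sqrt hS
    rwa [Real.sqrt_sq (by positivity)] at h
  have hsqrte3 : (3 / 4 : ℝ) ≤ Real.sqrt e3 := by
    have := Real.sqrt_le_sqrt he3
    rwa [Real.sqrt_sq (by norm_num)] at this
  have hterm1 : (|u| / Real.sqrt e3) * Real.sqrt (Complex.normSq e1 + Complex.normSq e2)
      ≤ 1 / 36 := by
    have hse3 : 0 < Real.sqrt e3 := lt_of_lt_of_le (by norm_num) hsqrte3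
    have h1 : (|u| / Real.sqrt e3) * Real.sqrt (Complex.normSq e1 + Complex.normSq e2)
        ≤ (|u| / Real.sqrt e3) * ((1 / 48) / |u|) := by
      apply mul_le_mul_of_nonneg_left hsqrtS (by positivity)
    have h2 : (|u| / Real.sqrt e3) * ((1 / 48) / |u|) = (1 / 48) / Real.sqrt e3 := by
      field_simp
    have h3 : (1 / 48 : ℝ) / Real.sqrt e3 ≤ (1 / 48) / (3 / 4) :=
      div_le_div_of_nonneg_left (by norm_num) (by norm_num) hsqrte3
    have h4 : (1 / 48 : ℝ) / (3 / 4) ≤ 1 / 36 := by norm_num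
    linarith [h1, h2 ▸ h1]
  -- second max term ≤ 1/36
  have hterm2 : u ^ 2 * Real.sqrt (e4 ^ 2 + e5 ^ 2) ≤ 1 / 36 := by
    have hE : e4 ^ 2 + e5 ^ 2 ≤ (1 / (36 * u ^ 2)) ^ 2 := by
      rw [he4def, he5def, div_pow, div_pow, ← add_div]
      rw [div_le_iff₀ (by positivity)]
      have heq : (1 / (36 * u ^ 2)) ^ 2 * (u ^ 3) ^ 2 = (1 / 1296) * u ^ 2 := by
        field_simp
        ring
      rw [heq]
      have h4 : f4 ^ 2 ≤ 25 := by
        calc f4 ^ 2 = |f4| ^ 2 := (sq_abs f4).symm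
          _ ≤ 5 ^ 2 := pow_le_pow_left₀ (abs_nonneg _) hf4 2
          _ = 25 := by norm_num
      have h5 : f5 ^ 2 ≤ 25 := by
        calc f5 ^ 2 = |f5| ^ 2 := (sq_abs f5).symm
          _ ≤ 5 ^ 2 := pow_le_pow_left₀ (abs_nonneg _) hf5 2
          _ = 25 := by norm_num
      linarith
    have h := Real.sqrt_le_sqrt hE
    rw [Real.sqrt_sq (by positivity)] at h
    calc u ^ 2 * Real.sqrt (e4 ^ 2 + e5 ^ 2) ≤ u ^ 2 * (1 / (36 * u ^ 2)) :=
          mul_le_mul_of_nonneg_left h (le_of_lt hu2pos)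
      _ = 1 / 36 := by
          field_simp
  have hmax : max ((|u| / Real.sqrt e3) * Real.sqrt (Complex.normSq e1 + Complex.normSq e2))
      (u ^ 2 * Real.sqrt (e4 ^ 2 + e5 ^ 2)) ≤ 1 / 36 := max_le hterm1 hterm2
  have : (1 / (18 * (1 / 1000)) : ℝ) * (1 / 1000) = 1 / 18 := by norm_num
  rw [this]
  linarith

/-- **Frame bounds in the far-field region imply the boundary positivity hypotheses.** -/
theorem frame_bounds_far_field
    (a A ξ1 ξ2 ub u : ℝ) (f1 f2 : ℂ) (f3 f4 f5 : ℝ)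
    (hA0 : 0 < |A|) (hAa : |A| ≤ |a|) (ha : |a| ≤ 1 / 1000)
    (hub : 0 < ub) (hub2 : ub < 2) (hu : u ≤ -1000)
    (hξ : Real.sqrt (ξ1 ^ 2 + ξ2 ^ 2) < 4 * |a / A|)
    (hf1 : ‖f1‖ ≤ 5) (hf2 : ‖f2‖ ≤ 5)
    (hf3 : |f3| ≤ 5) (hf4 : |f4| ≤ 5) (hf5 : |f5| ≤ 5) :
    let ρ : ℝ := A ^ 2 * ub - u
    let eaA : ℝ := (a / 2) * (1 + (A ^ 2 / a ^ 2) * (ξ1 ^ 2 + ξ2 ^ 2))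
    let e1 : ℂ := Complex.ofReal (eaA / ρ) + f1 / (Complex.ofReal u) ^ 2
    let e2 : ℂ := Complex.I * Complex.ofReal (eaA / ρ) + f2 / (Complex.ofReal u) ^ 2
    let e3 : ℝ := 1 + f3 / u ^ 2
    let e4 : ℝ := f4 / u ^ 3
    let e5 : ℝ := f5 / u ^ 3
    (3 / 4 : ℝ) ^ 2 ≤ e3 ∧ 0 < e3 ∧
      2 * max ((|u| / Real.sqrt e3) * Real.sqrt (Complex.normSq e1 + Complex.normSq e2))
          (u ^ 2 * Real.sqrt (e4 ^ 2 + e5 ^ 2))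
        ≤ (1 / (18 * (1 / 1000))) * (1 / 1000) := by
  intro ρ eaA e1 e2 e3 e4 e5
  exact frame_bounds_far_field_aux a A ξ1 ξ2 ub u f1 f2 f3 f4 f5 hA0 hAa ha hub hub2 hu hξ
    hf1 hf2 hf3 hf4 hf5 ρ eaA e1 e2 e3 e4 e5 rfl rfl rfl rfl rfl rfl rfl
end

section
/- (Trapped sphere criterion) Let c ∈ (0,1), 𝔄 > 0, ū1 ∈ (0,1), and let η : D_4(0) × (0,1) → ℂ be continuous. Set Λ = inf_{ξ ∈ D_4(0)} ∫₀^{ū1} |η(ξ,s)|² ds and assume Λ > 0 and 0 < 𝔄 < (1/4)·√c·min{1, Λ}. Set u1 = −Λ/(2𝔄²) and ρ1 = 𝔄²·ū1 − u1. Suppose γ2, γ6 : D_4(0) → ℝ satisfy, for every ξ ∈ D_4(0): | u1²·γ2(ξ) − 𝔄²·u1²/ρ1 + ∫₀^{ū1} |η(ξ,s)|² ds | ≤ 1/(c·|u1|) and | u1²·γ6(ξ) + u1²/ρ1 | ≤ 1/(c·|u1|). Then γ2(ξ) < 0 and γ6(ξ) < 0 for every ξ ∈ D_4(0). -/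
open MeasureTheory

noncomputable section

set_option maxHeartbeats 1600000 in
private lemma trapped_aux (c A ub1 Λ u1 ρ1 : ℝ)
    (hc0 : 0 < c) (hc1 : c < 1) (hA : 0 < A) (hub0 : 0 < ub1) (hub1' : ub1 < 1)
    (hΛpos : 0 < Λ) (hAsmall : A < (1 / 4) * Real.sqrt c * min 1 Λ)
    (hu1 : u1 = -Λ / (2 * A ^ 2)) (hρ1 : ρ1 = A ^ 2 * ub1 - u1) :
    1 / (c * |u1|) < u1 ^ 2 / ρ1 ∧ A ^ 2 * u1 ^ 2 / ρ1 + 1 / (c * |u1|) < Λ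
      ∧ 0 < u1 ^ 2 ∧ 0 < ρ1 := by
  have hm : 0 < min 1 Λ := lt_min one_pos hΛpos
  have hm1 : min 1 Λ ≤ 1 := min_le_left _ _
  have hmΛ : min 1 Λ ≤ Λ := min_le_right _ _
  have hs : Real.sqrt c ^ 2 = c := Real.sq_sqrt hc0.le
  have hs0 : 0 ≤ Real.sqrt c := Real.sqrt_nonneg c
  have hA2 : A ^ 2 < c * (min 1 Λ) ^ 2 / 16 := by nlinarith
  have hmm : (min 1 Λ) ^ 2 ≤ Λ := by nlinarith
  have hmm2 : (min 1 Λ) ^ 2 ≤ Λ ^ 2 := by nlinarith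
  have hA2Λ : 16 * A ^ 2 < c * Λ := by nlinarith [mul_le_mul_of_nonneg_left hmm hc0.le]
  have hA2Λ2 : 16 * A ^ 2 < c * Λ ^ 2 := by
    nlinarith [mul_le_mul_of_nonneg_left hmm2 hc0.le]
  have hA2pos : 0 < A ^ 2 := by positivity
  have hA216 : A ^ 2 < 1 / 16 := by nlinarith
  set w := Λ / (2 * A ^ 2) with hw
  have hwpos : 0 < w := by positivity
  have hweq : 2 * A ^ 2 * w = Λ := by rw [hw]; field_simp
  have hu1w : u1 = -w := by rw [hu1, hw]; ring
  have hcw : 8 < c * w := by nlinarith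
  have hw8 : 8 < w := by nlinarith
  have hρ : ρ1 = A ^ 2 * ub1 + w := by rw [hρ1, hu1w]; ring
  have hρpos : 0 < ρ1 := by rw [hρ]; positivity
  have habs : |u1| = w := by rw [hu1w, abs_neg, abs_of_pos hwpos]
  have hu1sq : u1 ^ 2 = w ^ 2 := by rw [hu1w]; ring
  have hcwpos : 0 < c * w := by positivity
  clear hAsmall hs hs0 hm hm1 hmΛ hmm hmm2 hA2 hu1 hρ1 hw hu1w hc1
  refine ⟨?_, ?_, by rw [hu1sq]; positivity, hρpos⟩
  · rw [habs, hu1sq, div_lt_div_iff₀ hcwpos hρpos]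
    have e1 : 8 * w ^ 2 < w ^ 2 * (c * w) := by nlinarith [mul_pos hwpos hwpos]
    have e2 : 64 * w < 8 * w ^ 2 := by nlinarith
    have e3 : ρ1 < 1 / 16 + w := by nlinarith [mul_lt_of_lt_one_right hA2pos hub1']
    nlinarith
  · rw [habs, hu1sq]
    have keyA : A ^ 2 * w ^ 2 / ρ1 < Λ / 2 := by
      rw [div_lt_iff₀ hρpos]
      -- A² w² * 2 < Λ ρ1 :  Λ = 2A²w, ρ1 ≥ w  ⇒  Λ ρ1 ≥ 2A²w² + 2A²w·A²ub1
      have hρw : w < ρ1 := by nlinarith [mul_pos hA2pos hub0]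
      have hid : Λ / 2 * w = A ^ 2 * w ^ 2 := by rw [← hweq]; ring
      nlinarith [mul_lt_mul_of_pos_left hρw (by positivity : (0:ℝ) < Λ / 2)]
    have keyC : 1 / (c * w) < Λ / 2 := by
      rw [div_lt_iff₀ hcwpos]
      -- 2 < Λ (c w) : Λ c w · 2A² = cΛ² > 16 A² ⇒ Λ c w > 8
      nlinarith [mul_pos hA2pos hwpos]
    linarith

set_option maxHeartbeats 800000 in
/-- **Trapped sphere criterion.** -/
theorem trapped_sphere_criterion
    (c A ub1 : ℝ)
    (η : EuclideanSpace ℝ (Fin 2) → ℝ → ℂ)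
    (γ2 γ6 : EuclideanSpace ℝ (Fin 2) → ℝ)
    (hc : c ∈ Set.Ioo (0 : ℝ) 1) (hA : 0 < A) (hub1 : ub1 ∈ Set.Ioo (0 : ℝ) 1)
    (hη : ContinuousOn (fun p : EuclideanSpace ℝ (Fin 2) × ℝ => η p.1 p.2)
      (Metric.ball (0 : EuclideanSpace ℝ (Fin 2)) 4 ×ˢ Set.Ioo (0 : ℝ) 1))
    (Λ : ℝ)
    (hΛdef : Λ = ⨅ ξ : Metric.ball (0 : EuclideanSpace ℝ (Fin 2)) 4,
        ∫ s in (0 : ℝ)..ub1, Complex.normSq (η ξ.1 s))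
    (hΛpos : 0 < Λ)
    (hAsmall : A < (1 / 4) * Real.sqrt c * min 1 Λ)
    (u1 ρ1 : ℝ) (hu1 : u1 = -Λ / (2 * A ^ 2)) (hρ1 : ρ1 = A ^ 2 * ub1 - u1)
    (hγ2 : ∀ ξ ∈ Metric.ball (0 : EuclideanSpace ℝ (Fin 2)) 4,
      |u1 ^ 2 * γ2 ξ - A ^ 2 * u1 ^ 2 / ρ1 + ∫ s in (0 : ℝ)..ub1, Complex.normSq (η ξ s)|
        ≤ 1 / (c * |u1|))
    (hγ6 : ∀ ξ ∈ Metric.ball (0 : EuclideanSpace ℝ (Fin 2)) 4,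
      |u1 ^ 2 * γ6 ξ + u1 ^ 2 / ρ1| ≤ 1 / (c * |u1|)) :
    ∀ ξ ∈ Metric.ball (0 : EuclideanSpace ℝ (Fin 2)) 4, γ2 ξ < 0 ∧ γ6 ξ < 0 := by
  intro ξ hξ
  obtain ⟨hc0, hc1⟩ := hc
  obtain ⟨hub0, hub1'⟩ := hub1
  have hI : Λ ≤ ∫ s in (0 : ℝ)..ub1, Complex.normSq (η ξ s) := by
    rw [hΛdef]
    exact ciInf_le ⟨0, by
      rintro x ⟨p, rfl⟩
      exact intervalIntegral.integral_nonneg hub0.le (fun s _ => Complex.normSq_nonneg _)⟩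
      (⟨ξ, hξ⟩ : Metric.ball (0 : EuclideanSpace ℝ (Fin 2)) 4)
  obtain ⟨k1, k2, hu1sq, hρpos⟩ :=
    trapped_aux c A ub1 Λ u1 ρ1 hc0 hc1 hA hub0 hub1' hΛpos hAsmall hu1 hρ1
  have h2 := (abs_le.1 (hγ2 ξ hξ)).2
  have h6 := (abs_le.1 (hγ6 ξ hξ)).2
  constructor
  · by_contra h
    push_neg at h
    nlinarith [mul_nonneg hu1sq.le h]
  · by_contra h
    push_neg at h
    nlinarith [mul_nonneg hu1sq.le h]
end
end

section
/- (Doubly scaled Minkowski coordinates) Let a, 𝔄 ∈ ℝ with a ≠ 0 and 𝔄 ≠ 0, let ξ = (ξ¹,ξ²) ∈ ℝ², ū > 0 and u < 0. Set ρ = 𝔄²·ū − u, m = (𝔄²/a²)·|ξ|², X⁰ = (𝔄²·ū + u)/(√2·|𝔄|), and X = (1/(√2·|𝔄|)) · (ρ/(1+m)) · ( 2(𝔄/a)ξ¹, 2(𝔄/a)ξ², −1+m ) ∈ ℝ³. Then: (i) the Euclidean norm satisfies |X| = ρ/(√2·|𝔄|) = (𝔄²ū − u)/(√2·|𝔄|);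 (ii) u = |𝔄|·(X⁰ − |X|)/√2 and ū = (X⁰ + |X|)/(√2·|𝔄|); (iii) −(X⁰)² + |X|² = −2·u·ū; (iv) |X⁰| < |X|, and X does not lie on the nonnegative X³-axis {0}×{0}×[0,∞). -/
/-- **Doubly scaled Minkowski coordinates.** -/
theorem doubly_scaled_minkowski_coordinates
    (a A ξ1 ξ2 ub u ρ m X0 X1 X2 X3 : ℝ)
    (ha : a ≠ 0) (hA : A ≠ 0) (hub : 0 < ub) (hu : u < 0)
    (hρ : ρ = A ^ 2 * ub - u)
    (hm : m = (A ^ 2 / a ^ 2) * (ξ1 ^ 2 + ξ2 ^ 2))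
    (hX0 : X0 = (A ^ 2 * ub + u) / (Real.sqrt 2 * |A|))
    (hX1 : X1 = (1 / (Real.sqrt 2 * |A|)) * (ρ / (1 + m)) * (2 * (A / a) * ξ1))
    (hX2 : X2 = (1 / (Real.sqrt 2 * |A|)) * (ρ / (1 + m)) * (2 * (A / a) * ξ2))
    (hX3 : X3 = (1 / (Real.sqrt 2 * |A|)) * (ρ / (1 + m)) * (-1 + m)) :
    Real.sqrt (X1 ^ 2 + X2 ^ 2 + X3 ^ 2) = ρ / (Real.sqrt 2 * |A|) ∧
    u = |A| * (X0 - Real.sqrt (X1 ^ 2 + X2 ^ 2 + X3 ^ 2)) / Real.sqrt 2 ∧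
    ub = (X0 + Real.sqrt (X1 ^ 2 + X2 ^ 2 + X3 ^ 2)) / (Real.sqrt 2 * |A|) ∧
    -X0 ^ 2 + (X1 ^ 2 + X2 ^ 2 + X3 ^ 2) = -2 * u * ub ∧
    |X0| < Real.sqrt (X1 ^ 2 + X2 ^ 2 + X3 ^ 2) ∧
    ¬(X1 = 0 ∧ X2 = 0 ∧ 0 ≤ X3) := by
  have hA2 : 0 < A ^ 2 := by positivity
  have ha2 : 0 < a ^ 2 := by positivity
  have hm0 : 0 ≤ m := by rw [hm]; positivity
  have h1m : 0 < 1 + m := by linarith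
  have h1m' : (1 + m) ≠ 0 := ne_of_gt h1m
  have hρ0 : 0 < ρ := by rw [hρ]; nlinarith
  have habs : 0 < |A| := abs_pos.mpr hA
  have habs' : |A| ≠ 0 := ne_of_gt habs
  have hs2 : Real.sqrt 2 ^ 2 = 2 := Real.sq_sqrt (by norm_num)
  have hs : 0 < Real.sqrt 2 := Real.sqrt_pos.mpr (by norm_num)
  have hs' : Real.sqrt 2 ≠ 0 := ne_of_gt hs
  have hsa : 0 < Real.sqrt 2 * |A| := by positivity
  have hsa' : Real.sqrt 2 * |A| ≠ 0 := ne_of_gt hsa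
  have hA2abs : |A| ^ 2 = A ^ 2 := sq_abs A
  have h2A : (Real.sqrt 2 * |A|) ^ 2 = 2 * A ^ 2 := by rw [mul_pow, hs2, hA2abs]
  have hsum : (2 * (A / a) * ξ1) ^ 2 + (2 * (A / a) * ξ2) ^ 2 + (-1 + m) ^ 2
      = (1 + m) ^ 2 := by
    rw [hm]; field_simp; ring
  have hkey : X1 ^ 2 + X2 ^ 2 + X3 ^ 2 = (ρ / (Real.sqrt 2 * |A|)) ^ 2 := by
    have : X1 ^ 2 + X2 ^ 2 + X3 ^ 2
        = ((1 / (Real.sqrt 2 * |A|)) * (ρ / (1 + m))) ^ 2 *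
          ((2 * (A / a) * ξ1) ^ 2 + (2 * (A / a) * ξ2) ^ 2 + (-1 + m) ^ 2) := by
      rw [hX1, hX2, hX3]; ring
    rw [this, hsum]
    field_simp
  have hsqrt : Real.sqrt (X1 ^ 2 + X2 ^ 2 + X3 ^ 2) = ρ / (Real.sqrt 2 * |A|) := by
    rw [hkey]; exact Real.sqrt_sq (by positivity)
  refine ⟨hsqrt, ?_, ?_, ?_, ?_, ?_⟩
  · rw [hsqrt, hX0, hρ]
    rw [div_sub_div_same]
    have h1 : A ^ 2 * ub + u - (A ^ 2 * ub - u) = 2 * u := by ring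
    rw [h1]
    field_simp
    linear_combination u * hs2
  · rw [hsqrt, hX0, hρ, ← add_div]
    have h1 : A ^ 2 * ub + u + (A ^ 2 * ub - u) = 2 * (A ^ 2 * ub) := by ring
    rw [h1]
    field_simp
    linear_combination |A| ^ 2 * hs2 + 2 * hA2abs
  · rw [hkey, hX0, hρ, div_pow, div_pow, h2A]
    field_simp
    ring
  · rw [hsqrt, hX0, abs_div, abs_of_pos hsa]
    rw [div_lt_div_iff₀ hsa hsa]
    have hA2ub : 0 < A ^ 2 * ub := mul_pos hA2 hub
    have hlt : |A ^ 2 * ub + u| < ρ := by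
      rw [hρ, abs_lt]; constructor <;> linarith
    exact mul_lt_mul_of_pos_right hlt hsa
  · rintro ⟨h1, h2, h3⟩
    have hc : 0 < (1 / (Real.sqrt 2 * |A|)) * (ρ / (1 + m)) := by positivity
    have hne : (2 * (A / a)) ≠ 0 := mul_ne_zero (by norm_num) (div_ne_zero hA ha)
    have hξ1 : ξ1 = 0 := by
      by_contra h
      exact (mul_ne_zero (ne_of_gt hc) (mul_ne_zero hne h)) (hX1 ▸ h1)
    have hξ2 : ξ2 = 0 := by
      by_contra h
      exact (mul_ne_zero (ne_of_gt hc) (mul_ne_zero hne h)) (hX2 ▸ h2)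
    have hm0' : m = 0 := by rw [hm, hξ1, hξ2]; ring
    subst hm0'
    rw [hX3] at h3
    norm_num at h3
    have hpos : 0 < 1 / (Real.sqrt 2 * |A|) * ρ := by positivity
    have heq : |A|⁻¹ * (Real.sqrt 2)⁻¹ * ρ = 1 / (Real.sqrt 2 * |A|) * ρ := by
      rw [one_div, mul_inv]; ring
    linarith [heq ▸ h3]
end
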